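/- arXiv:1009.1909 — 5 statements merged into one kernel-verified Lean document; each statement's English description precedes it below -/
import Mathlib

section
/- Suppose Ψ satisfies Assumption 1. Then the design problem attains its infimum: there exists w* ∈ Ω with Range(K) ⊆ Range(M(w*)) such that Φ̂(M(w*)) = f*. -/
open Matrix Filter Topology

noncomputable section

attribute [local instance] Matrix.normedAddCommGroup Matrix.normedSpace

/-- Assumption 1: `Ψ` is convex, decreasing, twice continuously differentiable and bounded
below on the set of `k × k` real symmetric positive definite matrices, and `Ψ (X j) → ∞`
whenever `(X j)` is a bounded sequence of positive definite matrices whose smallest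
eigenvalues tend to `0`.  (Over `ℝ`, `Matrix.PosDef` includes symmetry.) -/
structure Assumption1 (k : ℕ) (Ψ : Matrix (Fin k) (Fin k) ℝ → ℝ) : Prop where
  convex : ∀ A B : Matrix (Fin k) (Fin k) ℝ, A.PosDef → B.PosDef →
    ∀ t : ℝ, 0 ≤ t → t ≤ 1 → Ψ (t • A + (1 - t) • B) ≤ t * Ψ A + (1 - t) * Ψ B
  decreasing : ∀ A B : Matrix (Fin k) (Fin k) ℝ, A.IsHermitian → B.PosDef →
    (A - B).PosSemidef → Ψ A ≤ Ψ B
  smooth : ContDiffOn ℝ 2 Ψ {U : Matrix (Fin k) (Fin k) ℝ | U.PosDef}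
  bddBelow : ∃ c : ℝ, ∀ U : Matrix (Fin k) (Fin k) ℝ, U.PosDef → c ≤ Ψ U
  blowup : ∀ (X : ℕ → Matrix (Fin k) (Fin k) ℝ) (hp : ∀ j, (X j).PosDef),
    (∃ C : ℝ, ∀ j i l, |X j i l| ≤ C) →
    Tendsto (fun j => ⨅ i, (hp j).isHermitian.eigenvalues i) atTop (𝓝 0) →
    Tendsto (fun j => Ψ (X j)) atTop atTop

/-- The simplex of designs. -/
def Omega (n : ℕ) : Set (Fin n → ℝ) := {w | (∀ i, 0 ≤ w i) ∧ ∑ i, w i = 1}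

/-- The moment matrix `M(w) = ∑ i, w i • A i`. -/
def Mmat {n m : ℕ} (A : Fin n → Matrix (Fin m) (Fin m) ℝ) (w : Fin n → ℝ) :
    Matrix (Fin m) (Fin m) ℝ := ∑ i, w i • A i

/-- `Range K ⊆ Range X`. -/
def RangeIncl {m k : ℕ} (K : Matrix (Fin m) (Fin k) ℝ) (X : Matrix (Fin m) (Fin m) ℝ) : Prop :=
  LinearMap.range (Matrix.toLin' K) ≤ LinearMap.range (Matrix.toLin' X)

/-- `Φ̂(X) = inf {Ψ U | U symmetric positive definite, X - K U Kᵀ positive semidefinite}`. -/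
def PhiHat {m k : ℕ} (K : Matrix (Fin m) (Fin k) ℝ) (Ψ : Matrix (Fin k) (Fin k) ℝ → ℝ)
    (X : Matrix (Fin m) (Fin m) ℝ) : ℝ :=
  sInf {y | ∃ U : Matrix (Fin k) (Fin k) ℝ, U.PosDef ∧ (X - K * U * Kᵀ).PosSemidef ∧ y = Ψ U}

/-- The optimal value `f*` of the design problem. -/
def fstar {n m k : ℕ} (A : Fin n → Matrix (Fin m) (Fin m) ℝ) (K : Matrix (Fin m) (Fin k) ℝ)
    (Ψ : Matrix (Fin k) (Fin k) ℝ → ℝ) : ℝ :=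
  sInf {y | ∃ w ∈ Omega n, RangeIncl K (Mmat A w) ∧ y = PhiHat K Ψ (Mmat A w)}

/-- `w` is an optimal solution of the design problem. -/
def IsOptimal {n m k : ℕ} (A : Fin n → Matrix (Fin m) (Fin m) ℝ) (K : Matrix (Fin m) (Fin k) ℝ)
    (Ψ : Matrix (Fin k) (Fin k) ℝ → ℝ) (w : Fin n → ℝ) : Prop :=
  w ∈ Omega n ∧ RangeIncl K (Mmat A w) ∧ PhiHat K Ψ (Mmat A w) = fstar A K Ψ

/-- The open domain `D` of the barrier subproblem. -/
def Dset (n : ℕ) : Set (Fin (n - 1) → ℝ) := {wt | (∀ i, 0 < wt i) ∧ ∑ i, wt i < 1}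

/-- `w(w̃) = (w̃₁, …, w̃_{n-1}, 1 - ∑ w̃ᵢ)`. -/
def extendW (n : ℕ) (wt : Fin (n - 1) → ℝ) : Fin n → ℝ :=
  fun i => if h : (i : ℕ) < n - 1 then wt ⟨i, h⟩ else 1 - ∑ j, wt j

/-- The log-barrier function `f_μ`. -/
def fmu {n m k : ℕ} (A : Fin n → Matrix (Fin m) (Fin m) ℝ) (K : Matrix (Fin m) (Fin k) ℝ)
    (Ψ : Matrix (Fin k) (Fin k) ℝ → ℝ) (μ : ℝ) (wt : Fin (n - 1) → ℝ) : ℝ :=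
  Ψ ((Kᵀ * (Mmat A (extendW n wt))⁻¹ * K)⁻¹)
    - μ * ∑ i, Real.log (wt i) - μ * Real.log (1 - ∑ i, wt i)


namespace DP


variable {k m : ℕ}

lemma star_id (x : Fin k → ℝ) : star x = x := by simp

lemma psd_quad {U : Matrix (Fin k) (Fin k) ℝ} (hU : U.PosSemidef) (x : Fin k → ℝ) :
    0 ≤ x ⬝ᵥ U *ᵥ x := by simpa using hU.dotProduct_mulVec_nonneg x

lemma herm_symm {U : Matrix (Fin k) (Fin k) ℝ} (hU : U.IsHermitian) (i l : Fin k) :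
    U l i = U i l := by
  conv_lhs => rw [← hU.eq]
  simp [conjTranspose_apply]

lemma psd_diag_nonneg {U : Matrix (Fin k) (Fin k) ℝ} (hU : U.PosSemidef) (i : Fin k) :
    0 ≤ U i i := by
  have := psd_quad hU (Pi.single i 1)
  simpa [mulVec_single, dotProduct_single] using this

lemma psd_entry_bound {U : Matrix (Fin k) (Fin k) ℝ} (hU : U.PosSemidef) (i l : Fin k) :
    |U i l| ≤ (U i i + U l l) / 2 := by
  have h1 := psd_quad hU (Pi.single i 1 + Pi.single l 1)
  have h2 := psd_quad hU (Pi.single i 1 - Pi.single l 1)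
  have e1 : (Pi.single i 1 + Pi.single l 1 : Fin k → ℝ) ⬝ᵥ U *ᵥ (Pi.single i 1 + Pi.single l 1)
      = U i i + U l i + (U i l + U l l) := by
    simp [mulVec_add, add_dotProduct, dotProduct_add, mulVec_single, dotProduct_single,
      single_dotProduct]
  have e2 : (Pi.single i 1 - Pi.single l 1 : Fin k → ℝ) ⬝ᵥ U *ᵥ (Pi.single i 1 - Pi.single l 1)
      = U i i - U l i - (U i l - U l l) := by
    simp [mulVec_sub, sub_dotProduct, dotProduct_sub, mulVec_single, dotProduct_single,
      single_dotProduct]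
  rw [e1] at h1; rw [e2] at h2
  have hs := herm_symm hU.1 i l
  rw [abs_le]; constructor <;> nlinarith


variable {k m : ℕ}

lemma dot_self_nonneg (x : Fin k → ℝ) : 0 ≤ x ⬝ᵥ x :=
  Finset.sum_nonneg fun i _ => mul_self_nonneg _

lemma dot_self_pos {x : Fin k → ℝ} (hx : x ≠ 0) : 0 < x ⬝ᵥ x := by
  obtain ⟨i, hi⟩ := Function.ne_iff.mp hx
  exact Finset.sum_pos' (fun j _ => mul_self_nonneg _)
    ⟨i, Finset.mem_univ i, mul_self_pos.mpr hi⟩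

lemma cs_bound (B : Matrix (Fin m) (Fin k) ℝ) (y : Fin k → ℝ) :
    (B *ᵥ y) ⬝ᵥ (B *ᵥ y) ≤ (∑ i, ∑ j, (B i j)^2) * (y ⬝ᵥ y) := by
  have h : ∀ i, (B *ᵥ y) i * (B *ᵥ y) i ≤ (∑ j, (B i j)^2) * (y ⬝ᵥ y) := by
    intro i
    have := Finset.sum_mul_sq_le_sq_mul_sq Finset.univ (fun j => B i j) (fun j => y j)
    have hy : y ⬝ᵥ y = ∑ j, y j ^ 2 := by simp [dotProduct, sq]
    have hBv : (B *ᵥ y) i = ∑ j, B i j * y j := rfl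
    rw [hBv, hy, ← sq]
    exact this
  calc (B *ᵥ y) ⬝ᵥ (B *ᵥ y) = ∑ i, (B *ᵥ y) i * (B *ᵥ y) i := rfl
    _ ≤ ∑ i : Fin m, (∑ j, (B i j)^2) * (y ⬝ᵥ y) := Finset.sum_le_sum fun i _ => h i
    _ = (∑ i, ∑ j, (B i j)^2) * (y ⬝ᵥ y) := by rw [Finset.sum_mul]

lemma abs_quad_bound (E : Matrix (Fin k) (Fin k) ℝ) (x : Fin k → ℝ) :
    |x ⬝ᵥ E *ᵥ x| ≤ (∑ i, ∑ j, |E i j|) * (x ⬝ᵥ x) := by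
  have hx2 : ∀ i l : Fin k, |x i| * |x l| ≤ x ⬝ᵥ x := by
    intro i l
    have hxx : x ⬝ᵥ x = ∑ j, x j ^ 2 := by simp [dotProduct, sq]
    have h1 : x i ^ 2 ≤ x ⬝ᵥ x := by
      rw [hxx]
      exact Finset.single_le_sum (f := fun j => x j ^ 2) (fun j _ => sq_nonneg _)
        (Finset.mem_univ i)
    have h2 : x l ^ 2 ≤ x ⬝ᵥ x := by
      rw [hxx]
      exact Finset.single_le_sum (f := fun j => x j ^ 2) (fun j _ => sq_nonneg _)
        (Finset.mem_univ l)
    nlinarith [abs_nonneg (x i), abs_nonneg (x l), sq_abs (x i), sq_abs (x l),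
      sq_nonneg (|x i| - |x l|)]
  calc |x ⬝ᵥ E *ᵥ x| = |∑ i, ∑ j, x i * (E i j * x j)| := by
        simp [dotProduct, mulVec, Finset.mul_sum]
    _ ≤ ∑ i, |∑ j, x i * (E i j * x j)| := Finset.abs_sum_le_sum_abs _ _
    _ ≤ ∑ i, ∑ j, |x i * (E i j * x j)| :=
        Finset.sum_le_sum fun i _ => Finset.abs_sum_le_sum_abs _ _
    _ ≤ ∑ i, ∑ j, |E i j| * (x ⬝ᵥ x) := by
        refine Finset.sum_le_sum fun i _ => Finset.sum_le_sum fun j _ => ?_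
        rw [abs_mul, abs_mul]
        calc |x i| * (|E i j| * |x j|) = |E i j| * (|x i| * |x j|) := by ring
          _ ≤ |E i j| * (x ⬝ᵥ x) := by
              exact mul_le_mul_of_nonneg_left (hx2 i j) (abs_nonneg _)
    _ = (∑ i, ∑ j, |E i j|) * (x ⬝ᵥ x) := by rw [Finset.sum_mul]; simp [Finset.sum_mul]

lemma psd_smul {A : Matrix (Fin m) (Fin m) ℝ} (hA : A.PosSemidef) {c : ℝ} (hc : 0 ≤ c) :
    (c • A).PosSemidef := by
  refine PosSemidef.of_dotProduct_mulVec_nonneg ?_ fun x => ?_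
  · have := hA.1
    unfold Matrix.IsHermitian at *
    rw [conjTranspose_smul, this]
    simp
  · rw [smul_mulVec, dotProduct_smul]
    exact mul_nonneg hc (hA.dotProduct_mulVec_nonneg x)

lemma smul_one_posdef {δ : ℝ} (hδ : 0 < δ) :
    (δ • (1 : Matrix (Fin k) (Fin k) ℝ)).PosDef := by
  rw [smul_one_eq_diagonal]
  exact Matrix.PosDef.diagonal fun _ => hδ

lemma psd_limit {X : ℕ → Matrix (Fin m) (Fin m) ℝ} {Y : Matrix (Fin m) (Fin m) ℝ}
    (hX : ∀ l, (X l).PosSemidef)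
    (h : ∀ i j, Tendsto (fun l => X l i j) atTop (𝓝 (Y i j))) : Y.PosSemidef := by
  have hsym : ∀ i j, Y j i = Y i j := by
    intro i j
    have heq : (fun l => X l j i) = fun l => X l i j := by
      funext l
      conv_lhs => rw [← (hX l).1.eq]
      simp [conjTranspose_apply]
    have h' : Tendsto (fun l => X l j i) atTop (𝓝 (Y i j)) := by
      rw [heq]; exact h i j
    exact tendsto_nhds_unique (h j i) h'
  refine PosSemidef.of_dotProduct_mulVec_nonneg ?_ fun x => ?_
  · ext i j
    rw [conjTranspose_apply, star_trivial, hsym i j]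
  · have hq : Tendsto (fun l => star x ⬝ᵥ X l *ᵥ x) atTop (𝓝 (star x ⬝ᵥ Y *ᵥ x)) := by
      simp only [dotProduct, mulVec]
      exact tendsto_finset_sum _ fun i _ => Tendsto.mul tendsto_const_nhds
        (tendsto_finset_sum _ fun j _ => Tendsto.mul (h i j) tendsto_const_nhds)
    exact ge_of_tendsto' hq fun l => (hX l).dotProduct_mulVec_nonneg x


variable {k m : ℕ}

lemma spectral_real {A : Matrix (Fin k) (Fin k) ℝ} (hA : A.IsHermitian) :
    A = (hA.eigenvectorUnitary : Matrix (Fin k) (Fin k) ℝ) * diagonal hA.eigenvalues *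
      star (hA.eigenvectorUnitary : Matrix (Fin k) (Fin k) ℝ) := by
  have := hA.spectral_theorem
  rwa [RCLike.ofReal_real_eq_id, Function.id_comp] at this

lemma key_conj {V X Y : Matrix (Fin k) (Fin k) ℝ} (h2 : star V * V = 1) :
    (V * X * star V) * (V * Y * star V) = V * (X * Y) * star V := by
  rw [mul_assoc (V * X) (star V) ((V * Y) * star V), ← mul_assoc (star V) (V * Y) (star V),
    ← mul_assoc (star V) V Y, h2, one_mul, ← mul_assoc (V * X) Y (star V), mul_assoc V X Y]

lemma dot_transpose_mulVec {V : Matrix (Fin k) (Fin k) ℝ} (h1 : V * Vᵀ = 1) (x : Fin k → ℝ) :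
    (Vᵀ *ᵥ x) ⬝ᵥ (Vᵀ *ᵥ x) = x ⬝ᵥ x := by
  rw [dotProduct_mulVec, vecMul_transpose, mulVec_mulVec, h1, one_mulVec]

lemma iInf_eigenvalues_quad_le {A : Matrix (Fin k) (Fin k) ℝ} (hA : A.IsHermitian)
    (x : Fin k → ℝ) :
    (⨅ i, hA.eigenvalues i) * (x ⬝ᵥ x) ≤ x ⬝ᵥ A *ᵥ x := by
  rcases Nat.eq_zero_or_pos k with hk | hk
  · subst hk
    have h1 : x ⬝ᵥ x = 0 := by simp [dotProduct]
    have h2 : x ⬝ᵥ A *ᵥ x = 0 := by simp [dotProduct]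
    rw [h1, h2, mul_zero]
  haveI : Nonempty (Fin k) := Fin.pos_iff_nonempty.mp hk
  set μ := hA.eigenvalues with hμ
  set Vm := (hA.eigenvectorUnitary : Matrix (Fin k) (Fin k) ℝ) with hVm
  have h1 : Vm * star Vm = 1 := mem_unitaryGroup_iff.mp hA.eigenvectorUnitary.2
  have hspec : A = Vm * diagonal μ * star Vm := spectral_real hA
  have hstar : star Vm = Vmᵀ := by
    rw [star_eq_conjTranspose, conjTranspose_eq_transpose_of_trivial]
  rw [hstar] at hspec h1
  have hquad : x ⬝ᵥ A *ᵥ x = ∑ i, μ i * ((Vmᵀ *ᵥ x) i * (Vmᵀ *ᵥ x) i) := by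
    rw [hspec, ← mulVec_mulVec, ← mulVec_mulVec, dotProduct_mulVec, ← mulVec_transpose]
    simp only [dotProduct, mulVec_diagonal]
    exact Finset.sum_congr rfl fun i _ => by ring
  have hyy : x ⬝ᵥ x = ∑ i, (Vmᵀ *ᵥ x) i * (Vmᵀ *ᵥ x) i := by
    rw [← dot_transpose_mulVec h1 x]; rfl
  rw [hquad, hyy, Finset.mul_sum]
  refine Finset.sum_le_sum fun i _ => ?_
  exact mul_le_mul_of_nonneg_right (ciInf_le (Finite.bddBelow_range μ) i) (mul_self_nonneg _)

lemma exists_pinv {M : Matrix (Fin m) (Fin m) ℝ} (hM : M.IsHermitian) :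
    ∃ P : Matrix (Fin m) (Fin m) ℝ, P.IsHermitian ∧ M * P * M = M := by
  set μ := hM.eigenvalues with hμ
  set Vm := (hM.eigenvectorUnitary : Matrix (Fin m) (Fin m) ℝ) with hVm
  have h2 : star Vm * Vm = 1 := mem_unitaryGroup_iff'.mp hM.eigenvectorUnitary.2
  have hspec : M = Vm * diagonal μ * star Vm := spectral_real hM
  classical
  set g : Fin m → ℝ := fun i => if μ i = 0 then 0 else (μ i)⁻¹ with hg
  refine ⟨Vm * diagonal g * star Vm, ?_, ?_⟩
  · unfold Matrix.IsHermitian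
    rw [conjTranspose_mul, conjTranspose_mul, ← star_eq_conjTranspose,
      star_star, diagonal_conjTranspose]
    have : star g = g := by funext i; simp
    rw [this, star_eq_conjTranspose, mul_assoc]
  · rw [hspec, key_conj h2, key_conj h2, diagonal_mul_diagonal, diagonal_mul_diagonal]
    have hfun : (fun i => μ i * g i * μ i) = μ := by
      funext i
      by_cases h : μ i = 0
      · simp [hg, Pi.mul_apply, h]
      · simp only [hg, h, ↓reduceIte]
        field_simp
    rw [hfun]


lemma herm_smul {k : ℕ} {X : Matrix (Fin k) (Fin k) ℝ} (h : X.IsHermitian) (c : ℝ) :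
    (c • X).IsHermitian := by
  unfold Matrix.IsHermitian at *
  rw [conjTranspose_smul, h]
  simp

lemma posdef_of_ge_smul_one {k : ℕ} {δ : ℝ} (hδ : 0 < δ) {W : Matrix (Fin k) (Fin k) ℝ}
    (hW : W.IsHermitian) (h : (W - δ • 1).PosSemidef) : W.PosDef := by
  refine PosDef.of_dotProduct_mulVec_pos hW fun x hx => ?_
  have h1 := h.dotProduct_mulVec_nonneg x
  rw [star_trivial, sub_mulVec, dotProduct_sub, smul_mulVec, one_mulVec,
    dotProduct_smul] at h1
  have h2 : 0 < x ⬝ᵥ x := dot_self_pos hx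
  rw [star_trivial]
  have : (0:ℝ) < δ * (x ⬝ᵥ x) := mul_pos hδ h2
  simp only [smul_eq_mul] at h1
  linarith

section WithDefs

/-- `RangeIncl` from a factorization `K = M * C`. -/
lemma rangeIncl_of_factor {m k : ℕ} {K : Matrix (Fin m) (Fin k) ℝ}
    {M : Matrix (Fin m) (Fin m) ℝ} {C : Matrix (Fin m) (Fin k) ℝ} (h : K = M * C) :
    RangeIncl K M := by
  unfold RangeIncl
  rw [h, Matrix.toLin'_mul]
  exact LinearMap.range_comp_le_range _ _

lemma factor_of_rangeIncl {m k : ℕ} {K : Matrix (Fin m) (Fin k) ℝ}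
    {M : Matrix (Fin m) (Fin m) ℝ} (h : RangeIncl K M) :
    ∃ B : Matrix (Fin m) (Fin k) ℝ, K = M * B := by
  classical
  have hcol : ∀ j : Fin k, ∃ b : Fin m → ℝ, M *ᵥ b = K *ᵥ Pi.single j 1 := by
    intro j
    have hmem : K *ᵥ Pi.single j 1 ∈ LinearMap.range (Matrix.toLin' K) :=
      ⟨Pi.single j 1, by simp [Matrix.toLin'_apply]⟩
    obtain ⟨b, hb⟩ := h hmem
    exact ⟨b, by simpa [Matrix.toLin'_apply] using hb⟩
  choose b hb using hcol
  refine ⟨Matrix.of (fun i j => b j i), ?_⟩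
  ext i j
  have h1 : (M *ᵥ b j) i = K i j := by rw [hb j]; simp [mulVec_single]
  simpa [Matrix.mul_apply, Matrix.mulVec, dotProduct] using h1.symm

lemma psd_le_factor {m : ℕ} {M Q : Matrix (Fin m) (Fin m) ℝ} (hM : M.PosSemidef)
    (hQ : Q.PosSemidef) (hMQ : (M - Q).PosSemidef) : ∃ C, Q = M * C := by
  obtain ⟨P, hPh, hMPM⟩ := exists_pinv hM.1
  have hker : ∀ v, M *ᵥ v = 0 → Q *ᵥ v = 0 := by
    intro v hv
    have h0 : star v ⬝ᵥ Q *ᵥ v = 0 := by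
      have hle := hMQ.dotProduct_mulVec_nonneg v
      rw [sub_mulVec, dotProduct_sub, hv, dotProduct_zero, zero_sub] at hle
      have := hQ.dotProduct_mulVec_nonneg v
      linarith
    exact (hQ.dotProduct_mulVec_zero_iff v).mp h0
  have hMC : M * (1 - P * M) = 0 := by
    rw [mul_sub, mul_one, ← mul_assoc, hMPM, sub_self]
  have hQC : Q * (1 - P * M) = 0 := by
    ext i j
    have hcol : M *ᵥ (fun l => (1 - P * M) l j) = 0 := by
      funext r
      have := congrFun (congrFun hMC r) j
      simpa [Matrix.mul_apply, Matrix.mulVec, dotProduct] using this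
    have := congrFun (hker _ hcol) i
    simpa [Matrix.mul_apply, Matrix.mulVec, dotProduct] using this
  have hQPM : Q = Q * (P * M) := by
    have h' : Q * 1 - Q * (P * M) = 0 := by rw [← mul_sub]; exact hQC
    rw [mul_one] at h'
    exact (sub_eq_zero.mp h')
  refine ⟨P * Q, ?_⟩
  calc Q = Qᴴ := hQ.1.eq.symm
    _ = (Q * (P * M))ᴴ := by rw [← hQPM]
    _ = (P * M)ᴴ * Qᴴ := conjTranspose_mul _ _
    _ = Mᴴ * Pᴴ * Qᴴ := by rw [conjTranspose_mul]
    _ = M * (P * Q) := by rw [hM.1.eq, hPh.eq, hQ.1.eq, mul_assoc]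

lemma rangeIncl_of_posDef {m k : ℕ} (K : Matrix (Fin m) (Fin k) ℝ)
    {M : Matrix (Fin m) (Fin m) ℝ} (hM : M.PosDef) : RangeIncl K M := by
  have hdet : IsUnit M.det := isUnit_iff_ne_zero.mpr hM.det_pos.ne'
  refine rangeIncl_of_factor (M := M) (C := M⁻¹ * K) ?_
  rw [← Matrix.mul_assoc, Matrix.mul_nonsing_inv _ hdet, Matrix.one_mul]

lemma ktk_posdef {m k : ℕ} {K : Matrix (Fin m) (Fin k) ℝ} (hK : K.rank = k) :
    (Kᵀ * K).PosDef := by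
  have hrn := LinearMap.finrank_range_add_finrank_ker (Matrix.mulVecLin K)
  have ht : Module.finrank ℝ (Fin k → ℝ) = k := by simp
  rw [Matrix.rank] at hK
  have hker0 : Module.finrank ℝ (LinearMap.ker (Matrix.mulVecLin K)) = 0 := by omega
  have hker : LinearMap.ker (Matrix.mulVecLin K) = ⊥ := Submodule.finrank_eq_zero.mp hker0
  have hinj : Function.Injective (Matrix.mulVecLin K) := LinearMap.ker_eq_bot.mp hker
  refine PosDef.of_dotProduct_mulVec_pos ?_ ?_
  · rw [← conjTranspose_eq_transpose_of_trivial]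
    exact isHermitian_conjTranspose_mul_self K
  · intro x hx
    have hKx : K *ᵥ x ≠ 0 := by
      intro h0
      apply hx
      apply hinj
      simpa [Matrix.mulVecLin_apply] using h0
    have : star x ⬝ᵥ (Kᵀ * K) *ᵥ x = (K *ᵥ x) ⬝ᵥ (K *ᵥ x) := by
      rw [star_trivial, ← mulVec_mulVec, dotProduct_mulVec, vecMul_transpose]
    rw [this]
    exact dot_self_pos hKx

lemma dot_mul_transpose {m k : ℕ} (K : Matrix (Fin m) (Fin k) ℝ) (x : Fin m → ℝ) :
    x ⬝ᵥ (K * Kᵀ) *ᵥ x = (Kᵀ *ᵥ x) ⬝ᵥ (Kᵀ *ᵥ x) := by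
  rw [← mulVec_mulVec, dotProduct_mulVec, ← mulVec_transpose]

lemma psd_sqrt_exists {m : ℕ} {M : Matrix (Fin m) (Fin m) ℝ} (hM : M.PosSemidef) :
    ∃ S : Matrix (Fin m) (Fin m) ℝ, Sᵀ = S ∧ S * S = M := by
  set μ := hM.1.eigenvalues with hμ
  set Vm := (hM.1.eigenvectorUnitary : Matrix (Fin m) (Fin m) ℝ) with hVm
  have h2 : star Vm * Vm = 1 := mem_unitaryGroup_iff'.mp hM.1.eigenvectorUnitary.2
  have hspec : M = Vm * diagonal μ * star Vm := spectral_real hM.1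
  set g : Fin m → ℝ := fun i => Real.sqrt (μ i) with hg
  refine ⟨Vm * diagonal g * star Vm, ?_, ?_⟩
  · rw [← conjTranspose_eq_transpose_of_trivial]
    rw [conjTranspose_mul, conjTranspose_mul, ← star_eq_conjTranspose,
      star_star, diagonal_conjTranspose]
    have : star g = g := by funext i; simp
    rw [this, star_eq_conjTranspose, mul_assoc]
  · rw [key_conj h2, diagonal_mul_diagonal, hspec]
    have hfun : (fun i => g i * g i) = μ := by
      funext i
      exact Real.mul_self_sqrt (hM.eigenvalues_nonneg i)
    rw [hfun]

/-- Feasibility: the inner set of `PhiHat` is nonempty when `Range K ⊆ Range M`. -/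
lemma phihat_feasible {m k : ℕ} {K : Matrix (Fin m) (Fin k) ℝ}
    {M : Matrix (Fin m) (Fin m) ℝ} (hM : M.PosSemidef) (hr : RangeIncl K M) :
    ∃ U : Matrix (Fin k) (Fin k) ℝ, U.PosDef ∧ (M - K * U * Kᵀ).PosSemidef := by
  obtain ⟨B, hB⟩ := factor_of_rangeIncl hr
  have hMt : Mᵀ = M := by
    rw [← conjTranspose_eq_transpose_of_trivial, hM.1.eq]
  obtain ⟨S, hSt, hSS⟩ := psd_sqrt_exists hM
  set cB : ℝ := ∑ i, ∑ j, (Bᵀ i j)^2 with hcB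
  set cS : ℝ := ∑ i, ∑ j, (S i j)^2 with hcS
  have hcBn : 0 ≤ cB := Finset.sum_nonneg fun i _ => Finset.sum_nonneg fun j _ => sq_nonneg _
  have hcSn : 0 ≤ cS := Finset.sum_nonneg fun i _ => Finset.sum_nonneg fun j _ => sq_nonneg _
  set c : ℝ := cB * cS with hc
  have hcn : 0 ≤ c := mul_nonneg hcBn hcSn
  have hkey : ∀ x : Fin m → ℝ, x ⬝ᵥ (K * Kᵀ) *ᵥ x ≤ c * (x ⬝ᵥ M *ᵥ x) := by
    intro x
    have h1 : x ⬝ᵥ (K * Kᵀ) *ᵥ x = (Kᵀ *ᵥ x) ⬝ᵥ (Kᵀ *ᵥ x) := dot_mul_transpose K x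
    have hKt : Kᵀ *ᵥ x = Bᵀ *ᵥ (M *ᵥ x) := by
      rw [hB, transpose_mul, hMt, ← mulVec_mulVec]
    have h2 : (Kᵀ *ᵥ x) ⬝ᵥ (Kᵀ *ᵥ x) ≤ cB * ((M *ᵥ x) ⬝ᵥ (M *ᵥ x)) := by
      rw [hKt]; exact cs_bound Bᵀ (M *ᵥ x)
    have hMx : M *ᵥ x = S *ᵥ (S *ᵥ x) := by rw [mulVec_mulVec, hSS]
    have h3 : (M *ᵥ x) ⬝ᵥ (M *ᵥ x) ≤ cS * ((S *ᵥ x) ⬝ᵥ (S *ᵥ x)) := by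
      rw [hMx]; exact cs_bound S (S *ᵥ x)
    have h4 : (S *ᵥ x) ⬝ᵥ (S *ᵥ x) = x ⬝ᵥ M *ᵥ x := by
      have := dot_mul_transpose S x
      rw [hSt, hSS] at this
      rw [← this]
    have hMxx : 0 ≤ x ⬝ᵥ M *ᵥ x := psd_quad hM x
    rw [h4] at h3
    calc x ⬝ᵥ (K * Kᵀ) *ᵥ x ≤ cB * ((M *ᵥ x) ⬝ᵥ (M *ᵥ x)) := by rw [h1]; exact h2
      _ ≤ cB * (cS * (x ⬝ᵥ M *ᵥ x)) := mul_le_mul_of_nonneg_left h3 hcBn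
      _ = c * (x ⬝ᵥ M *ᵥ x) := by rw [hc]; ring
  set ε : ℝ := 1 / (c + 1) with hε
  have hεpos : 0 < ε := by positivity
  have hKUK : K * (ε • (1 : Matrix (Fin k) (Fin k) ℝ)) * Kᵀ = ε • (K * Kᵀ) := by
    rw [Matrix.mul_smul, Matrix.smul_mul, Matrix.mul_one]
  refine ⟨ε • 1, smul_one_posdef hεpos, PosSemidef.of_dotProduct_mulVec_nonneg ?_ ?_⟩
  · rw [hKUK]
    have h1 : (K * Kᵀ).IsHermitian := by
      rw [← conjTranspose_eq_transpose_of_trivial]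
      exact isHermitian_mul_conjTranspose_self K
    exact hM.1.sub (herm_smul h1 ε)
  · intro x
    rw [hKUK, star_trivial, sub_mulVec, dotProduct_sub, smul_mulVec, dotProduct_smul]
    have h5 := hkey x
    have h6 : 0 ≤ x ⬝ᵥ M *ᵥ x := psd_quad hM x
    have h7 : ε * c ≤ 1 := by
      rw [hε, div_mul_eq_mul_div, one_mul, div_le_one (by linarith)]
      linarith
    have h9 : ε * (x ⬝ᵥ (K * Kᵀ) *ᵥ x) ≤ ε * (c * (x ⬝ᵥ M *ᵥ x)) :=
      mul_le_mul_of_nonneg_left h5 hεpos.le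
    have h8 : ε * (c * (x ⬝ᵥ M *ᵥ x)) ≤ 1 * (x ⬝ᵥ M *ᵥ x) := by
      rw [← mul_assoc]
      exact mul_le_mul_of_nonneg_right h7 h6
    simp only [smul_eq_mul] at *
    linarith

end WithDefs

lemma mmat_psd {n m : ℕ} (A : Fin n → Matrix (Fin m) (Fin m) ℝ) (hA : ∀ i, (A i).PosSemidef)
    {w : Fin n → ℝ} (hw : ∀ i, 0 ≤ w i) : (Mmat A w).PosSemidef := by
  unfold Mmat
  exact Finset.sum_induction _ _ (fun a b ha hb => ha.add hb) Matrix.PosSemidef.zero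
    (fun i _ => psd_smul (hA i) (hw i))

lemma mmat_apply {n m : ℕ} (A : Fin n → Matrix (Fin m) (Fin m) ℝ) (w : Fin n → ℝ) (i j : Fin m) :
    Mmat A w i j = ∑ p, w p * A p i j := by
  unfold Mmat
  rw [Matrix.sum_apply]
  simp [Finset.sum_apply]

lemma mmat_entry_bound {n m : ℕ} (A : Fin n → Matrix (Fin m) (Fin m) ℝ) {w : Fin n → ℝ}
    (hw : w ∈ Omega n) (i j : Fin m) :
    |Mmat A w i j| ≤ ∑ p, ∑ i', ∑ j', |A p i' j'| := by
  obtain ⟨hw0, hw1⟩ := hw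
  rw [mmat_apply]
  calc |∑ p, w p * A p i j| ≤ ∑ p, |w p * A p i j| := Finset.abs_sum_le_sum_abs _ _
    _ ≤ ∑ p, |A p i j| := by
        refine Finset.sum_le_sum fun p _ => ?_
        rw [abs_mul]
        have hwp1 : w p ≤ 1 := by
          rw [← hw1]
          exact Finset.single_le_sum (f := w) (fun q _ => hw0 q) (Finset.mem_univ p)
        calc |w p| * |A p i j| = w p * |A p i j| := by rw [abs_of_nonneg (hw0 p)]
          _ ≤ 1 * |A p i j| := mul_le_mul_of_nonneg_right hwp1 (abs_nonneg _)
          _ = |A p i j| := one_mul _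
    _ ≤ ∑ p, ∑ i', ∑ j', |A p i' j'| := by
        refine Finset.sum_le_sum fun p _ => ?_
        calc |A p i j| ≤ ∑ j', |A p i j'| :=
              Finset.single_le_sum (f := fun j' => |A p i j'|) (fun q _ => abs_nonneg _)
                (Finset.mem_univ j)
          _ ≤ ∑ i', ∑ j', |A p i' j'| :=
              Finset.single_le_sum (f := fun i' => ∑ j', |A p i' j'|)
                (fun q _ => Finset.sum_nonneg fun _ _ => abs_nonneg _) (Finset.mem_univ i)

lemma u_entry_bound {m k : ℕ} {K : Matrix (Fin m) (Fin k) ℝ} (hK : K.rank = k)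
    (aM : ℝ) (haM : 0 ≤ aM) :
    ∃ C : ℝ, 0 ≤ C ∧ ∀ (M : Matrix (Fin m) (Fin m) ℝ) (U : Matrix (Fin k) (Fin k) ℝ),
      (∀ i j, |M i j| ≤ aM) → U.PosSemidef → (M - K * U * Kᵀ).PosSemidef →
      ∀ i j, |U i j| ≤ C := by
  classical
  set L := (Kᵀ * K)⁻¹ * Kᵀ with hLdef
  have hdet : IsUnit (Kᵀ * K).det := isUnit_iff_ne_zero.mpr (ktk_posdef hK).det_pos.ne'
  have hLK : L * K = 1 := by
    rw [hLdef, Matrix.mul_assoc, Matrix.nonsing_inv_mul _ hdet]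
  have hKL : Kᵀ * Lᵀ = 1 := by
    rw [← transpose_mul, hLK, transpose_one]
  set cL : ℝ := ∑ p, ∑ q, |L p q| with hcLdef
  have hcLn : 0 ≤ cL := Finset.sum_nonneg fun _ _ => Finset.sum_nonneg fun _ _ => abs_nonneg _
  refine ⟨aM * cL ^ 2, by positivity, ?_⟩
  intro M U hM hU hpsd i j
  have hcong : (L * (M - K * U * Kᵀ) * Lᴴ).PosSemidef := hpsd.mul_mul_conjTranspose_same L
  rw [conjTranspose_eq_transpose_of_trivial] at hcong
  have hLML : L * (M - K * U * Kᵀ) * Lᵀ = L * M * Lᵀ - U := by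
    rw [Matrix.mul_sub, Matrix.sub_mul]
    congr 1
    have h1 : L * (K * U * Kᵀ) * Lᵀ = (L * K) * U * (Kᵀ * Lᵀ) := by
      simp only [Matrix.mul_assoc]
    rw [h1, hLK, hKL, Matrix.one_mul, Matrix.mul_one]
  rw [hLML] at hcong
  have hrow : ∀ p : Fin k, (∑ a, |L p a|) ≤ cL := by
    intro p
    rw [hcLdef]
    exact Finset.single_le_sum (f := fun p => ∑ a, |L p a|)
      (fun q _ => Finset.sum_nonneg fun _ _ => abs_nonneg _) (Finset.mem_univ p)
  have hentry : ∀ p : Fin k, (L * M * Lᵀ) p p ≤ aM * cL ^ 2 := by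
    intro p
    have he : (L * M * Lᵀ) p p = ∑ b, (∑ a, L p a * M a b) * L p b := by
      simp [Matrix.mul_apply, transpose_apply]
    rw [he]
    calc ∑ b, (∑ a, L p a * M a b) * L p b
        ≤ ∑ b, ((∑ a, |L p a|) * aM) * |L p b| := by
          refine Finset.sum_le_sum fun b _ => ?_
          calc (∑ a, L p a * M a b) * L p b ≤ |(∑ a, L p a * M a b) * L p b| := le_abs_self _
            _ ≤ (∑ a, |L p a * M a b|) * |L p b| := by
                rw [abs_mul]
                exact mul_le_mul_of_nonneg_right (Finset.abs_sum_le_sum_abs _ _) (abs_nonneg _)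
            _ ≤ (∑ a, |L p a| * aM) * |L p b| := by
                refine mul_le_mul_of_nonneg_right (Finset.sum_le_sum fun a _ => ?_) (abs_nonneg _)
                rw [abs_mul]
                exact mul_le_mul_of_nonneg_left (hM a b) (abs_nonneg _)
            _ = ((∑ a, |L p a|) * aM) * |L p b| := by simp only [Finset.sum_mul]
      _ = (∑ a, |L p a|) * aM * (∑ b, |L p b|) := by rw [← Finset.mul_sum]
      _ ≤ cL * aM * cL := by
          have h2 : (∑ a, |L p a|) * aM ≤ cL * aM :=
            mul_le_mul_of_nonneg_right (hrow p) haM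
          exact mul_le_mul h2 (hrow p) (Finset.sum_nonneg fun _ _ => abs_nonneg _)
            (by positivity)
      _ = aM * cL ^ 2 := by ring
  have hdiag : ∀ p : Fin k, U p p ≤ aM * cL ^ 2 := by
    intro p
    have h0 := psd_diag_nonneg hcong p
    rw [Matrix.sub_apply] at h0
    have := hentry p
    linarith
  have habs := psd_entry_bound hU i j
  have h1 := hdiag i
  have h2 := hdiag j
  linarith

lemma omega_compact (n : ℕ) : IsCompact (Omega n) := by
  have h : Omega n = stdSimplex ℝ (Fin n) := rfl
  rw [h]
  exact isCompact_stdSimplex _ _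

lemma two_div_tendsto {ρ : ℕ → ℕ} (hρ : StrictMono ρ) :
    Tendsto (fun q => 2/((ρ q : ℝ)+1)) atTop (𝓝 0) := by
  have hup : ∀ q : ℕ, 2/((ρ q : ℝ)+1) ≤ 2 * (1/((q:ℝ)+1)) := by
    intro q
    have h2 : q ≤ ρ q := hρ.le_apply
    have h1 : (q:ℝ) + 1 ≤ (ρ q : ℝ) + 1 := by
      have h4 : (q:ℝ) ≤ (ρ q : ℝ) := by exact_mod_cast h2
      linarith
    have h3 : 1/((ρ q : ℝ)+1) ≤ 1/((q:ℝ)+1) :=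
      one_div_le_one_div_of_le (by positivity) h1
    rw [mul_one_div, div_le_div_iff₀ (by positivity) (by positivity)]
    linarith
  have hlim : Tendsto (fun q : ℕ => 2 * (1/((q:ℝ)+1))) atTop (𝓝 0) := by
    have h5 := tendsto_one_div_add_atTop_nhds_zero_nat.const_mul (2:ℝ)
    simpa using h5
  exact tendsto_of_tendsto_of_tendsto_of_le_of_le tendsto_const_nhds hlim
    (fun q => by positivity) hup

end DP

set_option maxHeartbeats 1000000 in
/-- Under Assumption 1 the design problem attains its infimum. -/
theorem design_problem_attained (n m k : ℕ) (hn : 2 ≤ n) (hm : 1 ≤ m) (hk : 1 ≤ k) (hkm : k ≤ m)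
    (A : Fin n → Matrix (Fin m) (Fin m) ℝ) (hA : ∀ i, (A i).PosSemidef)
    (hex : ∃ w ∈ Omega n, (Mmat A w).PosDef)
    (K : Matrix (Fin m) (Fin k) ℝ) (hK : K.rank = k)
    (Ψ : Matrix (Fin k) (Fin k) ℝ → ℝ)
    (hΨ : Assumption1 k Ψ) :
    ∃ wstar : Fin n → ℝ, wstar ∈ Omega n ∧ RangeIncl K (Mmat A wstar) ∧
      PhiHat K Ψ (Mmat A wstar) = fstar A K Ψ := by
  classical
  obtain ⟨c, hc⟩ := hΨ.bddBelow
  set S : Set ℝ :=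
    {y | ∃ w ∈ Omega n, RangeIncl K (Mmat A w) ∧ y = PhiHat K Ψ (Mmat A w)} with hSdef
  have hfstar : fstar A K Ψ = sInf S := rfl
  have hTlb : ∀ (X : Matrix (Fin m) (Fin m) ℝ) (y : ℝ),
      (∃ U : Matrix (Fin k) (Fin k) ℝ, U.PosDef ∧ (X - K * U * Kᵀ).PosSemidef ∧ y = Ψ U) →
      c ≤ y := by
    rintro X y ⟨U, hU, -, rfl⟩
    exact hc U hU
  have hPhi_lb : ∀ w : Fin n → ℝ, w ∈ Omega n → RangeIncl K (Mmat A w) →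
      c ≤ PhiHat K Ψ (Mmat A w) := by
    intro w hw hr
    obtain ⟨U0, hU0, hU0psd⟩ := DP.phihat_feasible (DP.mmat_psd A hA hw.1) hr
    exact le_csInf ⟨Ψ U0, U0, hU0, hU0psd, rfl⟩ (hTlb _)
  have hSlb : ∀ y ∈ S, c ≤ y := by
    rintro y ⟨w, hw, hr, rfl⟩
    exact hPhi_lb w hw hr
  have hSbdd : BddBelow S := ⟨c, hSlb⟩
  have hSne : S.Nonempty := by
    obtain ⟨w0, hw0, hpd⟩ := hex
    exact ⟨_, w0, hw0, DP.rangeIncl_of_posDef K hpd, rfl⟩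
  have hseq : ∀ j : ℕ, ∃ w, w ∈ Omega n ∧ RangeIncl K (Mmat A w) ∧
      PhiHat K Ψ (Mmat A w) < fstar A K Ψ + 1/(j+1) := by
    intro j
    have hε : (0:ℝ) < 1/((j:ℝ)+1) := by positivity
    obtain ⟨y, hyS, hy⟩ := Real.lt_sInf_add_pos hSne hε
    obtain ⟨w, hw, hr, rfl⟩ := hyS
    exact ⟨w, hw, hr, by rw [hfstar]; push_cast; push_cast at hy; linarith⟩
  choose w hwΩ hwR hwlt using hseq
  have hUseq : ∀ j : ℕ, ∃ U : Matrix (Fin k) (Fin k) ℝ, U.PosDef ∧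
      (Mmat A (w j) - K * U * Kᵀ).PosSemidef ∧ Ψ U < fstar A K Ψ + 2/(j+1) := by
    intro j
    have hε : (0:ℝ) < 1/((j:ℝ)+1) := by positivity
    obtain ⟨U0, hU0, hU0psd⟩ := DP.phihat_feasible (DP.mmat_psd A hA (hwΩ j).1) (hwR j)
    have hne : {y | ∃ U : Matrix (Fin k) (Fin k) ℝ, U.PosDef ∧
        (Mmat A (w j) - K * U * Kᵀ).PosSemidef ∧ y = Ψ U}.Nonempty :=
      ⟨Ψ U0, U0, hU0, hU0psd, rfl⟩
    obtain ⟨y, hyT, hy⟩ := Real.lt_sInf_add_pos hne hε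
    obtain ⟨U, hU, hUpsd, rfl⟩ := hyT
    refine ⟨U, hU, hUpsd, ?_⟩
    have h2 := hwlt j
    have h3 : PhiHat K Ψ (Mmat A (w j)) = sInf {y | ∃ U : Matrix (Fin k) (Fin k) ℝ, U.PosDef ∧
        (Mmat A (w j) - K * U * Kᵀ).PosSemidef ∧ y = Ψ U} := rfl
    rw [← h3] at hy
    have h4 : 2/((j:ℝ)+1) = 1/((j:ℝ)+1) + 1/((j:ℝ)+1) := by ring
    push_cast at h2 hy ⊢
    linarith
  choose U hUpd hUpsd hUlt using hUseq
  set aM : ℝ := ∑ p, ∑ i', ∑ j', |A p i' j'| with haMdef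
  have haM : 0 ≤ aM :=
    Finset.sum_nonneg fun _ _ => Finset.sum_nonneg fun _ _ =>
      Finset.sum_nonneg fun _ _ => abs_nonneg _
  obtain ⟨C, hC0, hCbound⟩ := DP.u_entry_bound hK aM haM
  have hUb : ∀ j i l, |U j i l| ≤ C := fun j i l =>
    hCbound _ _ (fun i' j' => DP.mmat_entry_bound A (hwΩ j) i' j') (hUpd j).posSemidef
      (hUpsd j) i l
  obtain ⟨wstar, hwstarΩ, φ, hφ, hφtend⟩ := (DP.omega_compact n).tendsto_subseq hwΩ
  have hmem : ∀ q, U (φ q) ∈ Metric.closedBall (0 : Matrix (Fin k) (Fin k) ℝ) C := by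
    intro q
    rw [Metric.mem_closedBall, dist_zero_right, Matrix.norm_le_iff hC0]
    intro i l
    rw [Real.norm_eq_abs]
    exact hUb _ i l
  obtain ⟨Ustar, -, ψ, hψ, hψtend⟩ := tendsto_subseq_of_bounded Metric.isBounded_closedBall hmem
  set ρ : ℕ → ℕ := φ ∘ ψ with hρdef
  have hρ : StrictMono ρ := hφ.comp hψ
  have hwtend : Tendsto (fun q => w (ρ q)) atTop (𝓝 wstar) := hφtend.comp hψ.tendsto_atTop
  have hUtend : Tendsto (fun q => U (ρ q)) atTop (𝓝 Ustar) := hψtend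
  have hnorm0 : Tendsto (fun q => ‖U (ρ q) - Ustar‖) atTop (𝓝 0) := by
    have h1 : Tendsto (fun q => U (ρ q) - Ustar) atTop (𝓝 0) :=
      tendsto_sub_nhds_zero_iff.mpr hUtend
    simpa using h1.norm
  have hUe : ∀ i l, Tendsto (fun q => U (ρ q) i l) atTop (𝓝 (Ustar i l)) := by
    intro i l
    rw [← tendsto_sub_nhds_zero_iff]
    refine squeeze_zero_norm (fun q => ?_) hnorm0
    have h1 : U (ρ q) i l - Ustar i l = (U (ρ q) - Ustar) i l := by simp [Matrix.sub_apply]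
    rw [h1]
    exact Matrix.norm_entry_le_entrywise_sup_norm _
  have hwe : ∀ p, Tendsto (fun q => w (ρ q) p) atTop (𝓝 (wstar p)) := fun p =>
    ((continuous_apply p).tendsto wstar).comp hwtend
  have hMe : ∀ i l, Tendsto (fun q => Mmat A (w (ρ q)) i l) atTop (𝓝 (Mmat A wstar i l)) := by
    intro i l
    simp only [DP.mmat_apply]
    exact tendsto_finset_sum _ fun p _ => (hwe p).mul tendsto_const_nhds
  by_cases hcase : ∀ δ : ℝ, 0 < δ → ∃ q, (⨅ i, (hUpd (ρ q)).isHermitian.eigenvalues i) < δ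
  · exfalso
    have hchoice : ∀ r : ℕ, ∃ q,
        (⨅ i, (hUpd (ρ q)).isHermitian.eigenvalues i) < 1/((r:ℝ)+1) :=
      fun r => hcase _ (by positivity)
    choose qr hqr using hchoice
    have hp : ∀ r, (U (ρ (qr r))).PosDef := fun r => hUpd (ρ (qr r))
    have hbd : ∃ C' : ℝ, ∀ r i l, |U (ρ (qr r)) i l| ≤ C' := ⟨C, fun r i l => hUb _ i l⟩
    have hinf0 : Tendsto (fun r => ⨅ i, (hp r).isHermitian.eigenvalues i) atTop (𝓝 0) := by
      refine tendsto_of_tendsto_of_tendsto_of_le_of_le tendsto_const_nhds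
        tendsto_one_div_add_atTop_nhds_zero_nat (fun r => ?_) (fun r => ?_)
      · have hpos : ∀ i, 0 < (hp r).isHermitian.eigenvalues i := fun i =>
          (hp r).eigenvalues_pos i
        haveI : Nonempty (Fin k) := Fin.pos_iff_nonempty.mp hk
        exact le_ciInf fun i => (hpos i).le
      · exact (hqr r).le
    have hblow := hΨ.blowup (fun r => U (ρ (qr r))) hp hbd hinf0
    have hub : ∀ r, Ψ (U (ρ (qr r))) ≤ fstar A K Ψ + 2 := by
      intro r
      have h1 := hUlt (ρ (qr r))
      have h2 : 2/((ρ (qr r) : ℝ)+1) ≤ 2 := by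
        rw [div_le_iff₀ (by positivity)]
        have h3 : (0:ℝ) ≤ (ρ (qr r) : ℝ) := Nat.cast_nonneg _
        linarith
      push_cast at h1
      linarith
    obtain ⟨r, hr⟩ := (hblow.eventually (eventually_ge_atTop (fstar A K Ψ + 3))).exists
    have := hub r
    linarith
  · push_neg at hcase
    obtain ⟨δ, hδpos, hδle⟩ := hcase
    have hUge : ∀ q, (U (ρ q) - δ • 1).PosSemidef := by
      intro q
      have hherm := (hUpd (ρ q)).isHermitian
      refine PosSemidef.of_dotProduct_mulVec_nonneg ?_ ?_
      · exact hherm.sub (DP.herm_smul isHermitian_one δ)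
      · intro x
        rw [star_trivial, sub_mulVec, dotProduct_sub, smul_mulVec, one_mulVec,
          dotProduct_smul]
        have h1 := DP.iInf_eigenvalues_quad_le hherm x
        have h2 : δ * (x ⬝ᵥ x) ≤ (⨅ i, hherm.eigenvalues i) * (x ⬝ᵥ x) :=
          mul_le_mul_of_nonneg_right (hδle q) (DP.dot_self_nonneg x)
        simp only [smul_eq_mul]
        linarith
    have hUstar_ge : (Ustar - δ • 1).PosSemidef := by
      refine DP.psd_limit hUge ?_
      intro i l
      simp only [Matrix.sub_apply]
      exact (hUe i l).sub tendsto_const_nhds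
    have hUstar_psd : Ustar.PosSemidef := DP.psd_limit (fun q => (hUpd (ρ q)).posSemidef) hUe
    have hUstar_pd : Ustar.PosDef := DP.posdef_of_ge_smul_one hδpos hUstar_psd.1 hUstar_ge
    have hKUe : ∀ i l, Tendsto (fun q => (K * U (ρ q) * Kᵀ) i l) atTop
        (𝓝 ((K * Ustar * Kᵀ) i l)) := by
      intro i l
      simp only [Matrix.mul_apply, transpose_apply]
      exact tendsto_finset_sum _ fun b _ =>
        (tendsto_finset_sum _ fun a _ => tendsto_const_nhds.mul (hUe a b)).mul
          tendsto_const_nhds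
    have hlimpsd : (Mmat A wstar - K * Ustar * Kᵀ).PosSemidef := by
      refine DP.psd_limit (fun q => hUpsd (ρ q)) ?_
      intro i l
      simp only [Matrix.sub_apply]
      exact (hMe i l).sub (hKUe i l)
    have hMstar_psd : (Mmat A wstar).PosSemidef := DP.mmat_psd A hA hwstarΩ.1
    have hQpsd : (K * Ustar * Kᵀ).PosSemidef := by
      have h1 := hUstar_pd.posSemidef.mul_mul_conjTranspose_same K
      rwa [conjTranspose_eq_transpose_of_trivial] at h1
    obtain ⟨C0, hC0fac⟩ := DP.psd_le_factor hMstar_psd hQpsd hlimpsd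
    have hrange : RangeIncl K (Mmat A wstar) := by
      have hdetU : IsUnit Ustar.det := isUnit_iff_ne_zero.mpr hUstar_pd.det_pos.ne'
      have hdetK : IsUnit (Kᵀ * K).det :=
        isUnit_iff_ne_zero.mpr (DP.ktk_posdef hK).det_pos.ne'
      have hfac : K = Mmat A wstar * (C0 * (K * ((Kᵀ * K)⁻¹ * Ustar⁻¹))) := by
        rw [← Matrix.mul_assoc, ← hC0fac]
        calc K = K * Ustar * Ustar⁻¹ := by
              rw [Matrix.mul_assoc, Matrix.mul_nonsing_inv _ hdetU, Matrix.mul_one]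
          _ = K * Ustar * ((Kᵀ * K) * ((Kᵀ * K)⁻¹ * Ustar⁻¹)) := by
              rw [← Matrix.mul_assoc (Kᵀ * K), Matrix.mul_nonsing_inv _ hdetK, Matrix.one_mul]
          _ = (K * Ustar * Kᵀ) * (K * ((Kᵀ * K)⁻¹ * Ustar⁻¹)) := by
              simp only [Matrix.mul_assoc]
      exact DP.rangeIncl_of_factor hfac
    have hPhile : PhiHat K Ψ (Mmat A wstar) ≤ Ψ Ustar :=
      csInf_le ⟨c, fun y hy => hTlb _ y hy⟩ ⟨Ustar, hUstar_pd, hlimpsd, rfl⟩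
    have hfle : fstar A K Ψ ≤ PhiHat K Ψ (Mmat A wstar) := by
      rw [hfstar]
      exact csInf_le hSbdd ⟨wstar, hwstarΩ, hrange, rfl⟩
    have hΨle : Ψ Ustar ≤ fstar A K Ψ := by
      set β : ℕ → ℝ := fun q => ∑ i, ∑ l, |(Ustar - U (ρ q)) i l| with hβdef
      have hβnn : ∀ q, 0 ≤ β q := fun q =>
        Finset.sum_nonneg fun _ _ => Finset.sum_nonneg fun _ _ => abs_nonneg _
      have hβ0 : Tendsto β atTop (𝓝 0) := by
        have habs : ∀ i l : Fin k, Tendsto (fun q => |(Ustar - U (ρ q)) i l|) atTop (𝓝 0) := by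
          intro i l
          have h1 : Tendsto (fun q => Ustar i l - U (ρ q) i l) atTop (𝓝 0) := by
            have := tendsto_const_nhds (x := Ustar i l) (f := atTop (α := ℕ))
            simpa using this.sub (hUe i l)
          have h2 := h1.abs
          rw [abs_zero] at h2
          simp only [Matrix.sub_apply]
          exact h2
        have h3 : Tendsto β atTop (𝓝 (∑ i : Fin k, ∑ l : Fin k, (0:ℝ))) :=
          tendsto_finset_sum _ fun i _ => tendsto_finset_sum _ fun l _ => habs i l
        simpa using h3
      set t : ℕ → ℝ := fun q => (2/δ) * β q with htdef
      have ht0 : Tendsto t atTop (𝓝 0) := by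
        have := hβ0.const_mul (2/δ)
        simpa using this
      have htnn : ∀ q, 0 ≤ t q := fun q => mul_nonneg (by positivity) (hβnn q)
      set Cδ := Ψ ((δ/2) • (1 : Matrix (Fin k) (Fin k) ℝ)) with hCδdef
      have hhalf : ((δ/2) • (1 : Matrix (Fin k) (Fin k) ℝ)).PosDef :=
        DP.smul_one_posdef (by linarith)
      have hβt : ∀ q, β q = t q * (δ/2) := by
        intro q
        rw [htdef]
        field_simp
      have hkey : ∀ q, t q ≤ 1 →
          Ψ Ustar ≤ (1 - t q) * (fstar A K Ψ + 2/((ρ q : ℝ)+1)) + t q * Cδ := by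
        intro q htq
        set Uq := U (ρ q) with hUqdef
        set Wq := (1 - t q) • Uq + t q • ((δ/2) • (1 : Matrix (Fin k) (Fin k) ℝ)) with hWqdef
        have hUqquad : ∀ x : Fin k → ℝ, δ * (x ⬝ᵥ x) ≤ x ⬝ᵥ Uq *ᵥ x := by
          intro x
          have h1 := (hUge q).dotProduct_mulVec_nonneg x
          rw [star_trivial, sub_mulVec, dotProduct_sub, smul_mulVec, one_mulVec,
            dotProduct_smul] at h1
          simp only [smul_eq_mul] at h1
          linarith
        have hWherm : Wq.IsHermitian := by
          refine IsHermitian.add ?_ ?_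
          · exact DP.herm_smul (hUpd (ρ q)).isHermitian _
          · exact DP.herm_smul (DP.herm_smul isHermitian_one _) _
        have hWq_quad : ∀ x : Fin k → ℝ, x ⬝ᵥ Wq *ᵥ x =
            (1 - t q) * (x ⬝ᵥ Uq *ᵥ x) + t q * ((δ/2) * (x ⬝ᵥ x)) := by
          intro x
          rw [hWqdef, add_mulVec, dotProduct_add, smul_mulVec, dotProduct_smul,
            smul_mulVec, dotProduct_smul, smul_mulVec, one_mulVec, dotProduct_smul]
          simp only [smul_eq_mul]
        have hWpd : Wq.PosDef := by
          refine DP.posdef_of_ge_smul_one (show (0:ℝ) < δ/2 by linarith) hWherm (PosSemidef.of_dotProduct_mulVec_nonneg ?_ ?_)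
          · exact hWherm.sub (DP.herm_smul isHermitian_one _)
          · intro x
            rw [star_trivial, sub_mulVec, dotProduct_sub, smul_mulVec, one_mulVec,
              dotProduct_smul, hWq_quad]
            have h1 := hUqquad x
            have h2 := DP.dot_self_nonneg x
            simp only [smul_eq_mul]
            have h7 : (1 - t q) * (δ * (x ⬝ᵥ x)) ≤ (1 - t q) * (x ⬝ᵥ Uq *ᵥ x) :=
              mul_le_mul_of_nonneg_left h1 (by linarith)
            nlinarith [htnn q, htq, mul_nonneg (htnn q) h2,
              mul_nonneg (mul_nonneg (htnn q) hδpos.le) h2,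
              mul_nonneg (mul_nonneg (sub_nonneg.mpr htq) hδpos.le) h2]
        have hUWpsd : (Ustar - Wq).PosSemidef := by
          refine PosSemidef.of_dotProduct_mulVec_nonneg (hUstar_psd.1.sub hWherm) ?_
          intro x
          rw [star_trivial, sub_mulVec, dotProduct_sub, hWq_quad]
          have hE := DP.abs_quad_bound (Ustar - Uq) x
          have hEeq : (∑ i, ∑ l, |(Ustar - Uq) i l|) = β q := rfl
          rw [hEeq] at hE
          have h4 : x ⬝ᵥ (Ustar - Uq) *ᵥ x = x ⬝ᵥ Ustar *ᵥ x - x ⬝ᵥ Uq *ᵥ x := by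
            rw [sub_mulVec, dotProduct_sub]
          have h5 := neg_abs_le (x ⬝ᵥ (Ustar - Uq) *ᵥ x)
          have h3 : x ⬝ᵥ Uq *ᵥ x - β q * (x ⬝ᵥ x) ≤ x ⬝ᵥ Ustar *ᵥ x := by
            nlinarith [hE, h4, h5]
          have h1 := hUqquad x
          have h2 := DP.dot_self_nonneg x
          have h7 : t q * (δ * (x ⬝ᵥ x)) ≤ t q * (x ⬝ᵥ Uq *ᵥ x) :=
            mul_le_mul_of_nonneg_left h1 (htnn q)
          have h8 := hβt q
          nlinarith [htnn q]
        have hdec := hΨ.decreasing Ustar Wq hUstar_psd.1 hWpd hUWpsd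
        have hconv := hΨ.convex Uq ((δ/2) • 1) (hUpd (ρ q)) hhalf (1 - t q)
          (by linarith) (by linarith [htnn q])
        have hWeq : (1 - t q) • Uq + (1 - (1 - t q)) • ((δ/2) • (1:Matrix (Fin k) (Fin k) ℝ))
            = Wq := by
          rw [hWqdef]
          congr 1
          congr 1
          ring
        rw [hWeq] at hconv
        have hΨUq : Ψ Uq ≤ fstar A K Ψ + 2/((ρ q : ℝ)+1) := by
          have := hUlt (ρ q)
          push_cast at this
          linarith
        calc Ψ Ustar ≤ Ψ Wq := hdec
          _ ≤ (1 - t q) * Ψ Uq + (1 - (1 - t q)) * Cδ := hconv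
          _ ≤ (1 - t q) * (fstar A K Ψ + 2/((ρ q : ℝ)+1)) + t q * Cδ := by
              have h6 : (1 - (1 - t q)) = t q := by ring
              rw [h6]
              have h9 := mul_le_mul_of_nonneg_left hΨUq (by linarith : (0:ℝ) ≤ 1 - t q)
              linarith
      have he0 : Tendsto (fun q => 2/((ρ q : ℝ)+1)) atTop (𝓝 0) := DP.two_div_tendsto hρ
      have hrhs : Tendsto (fun q => (1 - t q) * (fstar A K Ψ + 2/((ρ q : ℝ)+1)) + t q * Cδ)
          atTop (𝓝 ((1 - 0) * (fstar A K Ψ + 0) + 0 * Cδ)) := by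
        exact ((tendsto_const_nhds.sub ht0).mul (tendsto_const_nhds.add he0)).add
          (ht0.mul tendsto_const_nhds)
      have hrhs' : Tendsto (fun q => (1 - t q) * (fstar A K Ψ + 2/((ρ q : ℝ)+1)) + t q * Cδ)
          atTop (𝓝 (fstar A K Ψ)) := by
        simpa using hrhs
      have hev : ∀ᶠ q in atTop, t q ≤ 1 :=
        (ht0.eventually_lt_const (show (0:ℝ) < 1 by norm_num)).mono fun q hq => hq.le
      exact ge_of_tendsto hrhs' (hev.mono fun q hq => hkey q hq)
    exact ⟨wstar, hwstarΩ, hrange, le_antisymm (hPhile.trans hΨle) hfle⟩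
end
end

section
/- Suppose Ψ satisfies Assumption 1. Let C > 0, let (w*, u*) solve the KKT system, and let (w, u) solve the perturbed KKT system with parameters μ > 0 and v ∈ ℝ^{n−1} satisfying ‖v‖_∞ < Cμ. Then (w*)^T u + w^T u* ≤ (2C + n)μ. -/
open Matrix Filter Topology

noncomputable section

attribute [local instance] Matrix.normedAddCommGroup Matrix.normedSpace

/-! ### Auxiliary lemmas -/

lemma aux_psd_smul {m : ℕ} {A : Matrix (Fin m) (Fin m) ℝ} (hA : A.PosSemidef) {c : ℝ}
    (hc : 0 ≤ c) : (c • A).PosSemidef := by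
  exact hA.smul hc

lemma aux_pd_smul {m : ℕ} {A : Matrix (Fin m) (Fin m) ℝ} (hA : A.PosDef) {c : ℝ}
    (hc : 0 < c) : (c • A).PosDef := by
  exact hA.smul hc

lemma aux_pd_combo {m : ℕ} {M₁ M₂ : Matrix (Fin m) (Fin m) ℝ} (h1 : M₁.PosDef)
    (h2 : M₂.PosDef) {a b : ℝ} (ha : 0 ≤ a) (hb : 0 ≤ b) (hab : a + b = 1) :
    (a • M₁ + b • M₂).PosDef := by
  rcases eq_or_lt_of_le ha with rfl | ha'
  · have hb1 : b = 1 := by linarith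
    simpa [hb1] using h2
  rcases eq_or_lt_of_le hb with rfl | hb'
  · have ha1 : a = 1 := by linarith
    simpa [ha1] using h1
  exact (aux_pd_smul h1 ha').add (aux_pd_smul h2 hb')

lemma aux_sym_transpose {m : ℕ} {A : Matrix (Fin m) (Fin m) ℝ} (hA : A.IsHermitian) :
    Aᵀ = A := by
  rw [← Matrix.conjTranspose_eq_transpose_of_trivial]; exact hA

lemma aux_rank_inj {m k : ℕ} {K : Matrix (Fin m) (Fin k) ℝ} (hK : K.rank = k) :
    Function.Injective K.mulVec := by
  have hker : LinearMap.ker K.mulVecLin = ⊥ := by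
    have h1 := LinearMap.finrank_range_add_finrank_ker K.mulVecLin
    have h2 : Module.finrank ℝ (LinearMap.range K.mulVecLin) = k := hK
    have h3 : Module.finrank ℝ (Fin k → ℝ) = k := by simp
    have h4 : Module.finrank ℝ (LinearMap.ker K.mulVecLin) = 0 := by omega
    exact Submodule.finrank_eq_zero.mp h4
  intro x y hxy
  have := LinearMap.ker_eq_bot.mp hker
  exact this hxy

lemma aux_info_posdef {m k : ℕ} {K : Matrix (Fin m) (Fin k) ℝ}
    (hKinj : Function.Injective K.mulVec) {M : Matrix (Fin m) (Fin m) ℝ} (hM : M.PosDef) :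
    (Kᵀ * M⁻¹ * K).PosDef := by
  have hMinv := hM.inv
  rw [← Matrix.conjTranspose_eq_transpose_of_trivial K]
  refine Matrix.PosDef.of_dotProduct_mulVec_pos (Matrix.isHermitian_conjTranspose_mul_mul K hMinv.1) fun x hx => ?_
  have hKx : K.mulVec x ≠ 0 := by
    intro h
    exact hx (hKinj (by simpa [Matrix.mulVec_zero] using h))
  simpa only [star_mulVec, dotProduct_mulVec, Matrix.vecMul_vecMul] using
    hMinv.dotProduct_mulVec_pos hKx

/-- The key minimal representation bound: for any left inverse `L` of `K`,
`L M Lᵀ ⪰ (Kᵀ M⁻¹ K)⁻¹`. -/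
lemma aux_min_repr {m k : ℕ} {K : Matrix (Fin m) (Fin k) ℝ}
    (hKinj : Function.Injective K.mulVec)
    {M : Matrix (Fin m) (Fin m) ℝ} (hM : M.PosDef)
    {L : Matrix (Fin k) (Fin m) ℝ} (hLK : L * K = 1) :
    (L * M * Lᵀ - (Kᵀ * M⁻¹ * K)⁻¹).PosSemidef := by
  have hG : (Kᵀ * M⁻¹ * K).PosDef := aux_info_posdef hKinj hM
  set G : Matrix (Fin k) (Fin k) ℝ := Kᵀ * M⁻¹ * K with hGdef
  letI := hM.isUnit.invertible
  letI := hG.isUnit.invertible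
  have hC : (G⁻¹).PosDef := hG.inv
  have tM : M⁻¹ᵀ = M⁻¹ := aux_sym_transpose hM.inv.1
  have tC : G⁻¹ᵀ = G⁻¹ := aux_sym_transpose hC.1
  set L0 : Matrix (Fin k) (Fin m) ℝ := G⁻¹ * Kᵀ * M⁻¹ with hL0def
  have trans3 : ∀ (P Q : Matrix (Fin k) (Fin m) ℝ) (S : Matrix (Fin m) (Fin m) ℝ),
      (P * S * Qᵀ)ᵀ = Q * Sᵀ * Pᵀ := by
    intros P Q S
    rw [Matrix.transpose_mul, Matrix.transpose_mul, Matrix.transpose_transpose,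
      Matrix.mul_assoc]
  have hL0T : L0ᵀ = M⁻¹ * (K * G⁻¹) := by
    rw [hL0def, Matrix.transpose_mul, Matrix.transpose_mul, tM, tC, Matrix.transpose_transpose]
  have e1 : L0 * M * L0ᵀ = G⁻¹ := by
    rw [hL0T, hL0def]
    calc G⁻¹ * Kᵀ * M⁻¹ * M * (M⁻¹ * (K * G⁻¹))
        = G⁻¹ * (Kᵀ * (M⁻¹ * (M * (M⁻¹ * (K * G⁻¹))))) := by
          simp only [Matrix.mul_assoc]
      _ = G⁻¹ * (Kᵀ * (M⁻¹ * (K * G⁻¹))) := by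
          rw [Matrix.mul_inv_cancel_left_of_invertible]
      _ = G⁻¹ * (G * G⁻¹) := by
          rw [hGdef]; simp only [Matrix.mul_assoc]
      _ = G⁻¹ := by rw [Matrix.mul_inv_of_invertible, Matrix.mul_one]
  have e2 : L * M * L0ᵀ = G⁻¹ := by
    rw [hL0T]
    calc L * M * (M⁻¹ * (K * G⁻¹)) = L * (M * (M⁻¹ * (K * G⁻¹))) := by
          rw [Matrix.mul_assoc]
      _ = L * (K * G⁻¹) := by rw [Matrix.mul_inv_cancel_left_of_invertible]
      _ = L * K * G⁻¹ := by rw [Matrix.mul_assoc]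
      _ = G⁻¹ := by rw [hLK, Matrix.one_mul]
  have e3 : L0 * M * Lᵀ = G⁻¹ := by
    have h := congrArg Matrix.transpose e2
    rw [trans3] at h
    rwa [aux_sym_transpose hM.1, tC] at h
  have key : (L - L0) * M * (L - L0)ᵀ = L * M * Lᵀ - G⁻¹ := by
    rw [Matrix.transpose_sub, Matrix.sub_mul, Matrix.sub_mul, Matrix.mul_sub, Matrix.mul_sub, e1, e2, e3]
    abel
  have hpsd : ((L - L0) * M * (L - L0)ᵀ).PosSemidef := by
    have := hM.posSemidef.mul_mul_conjTranspose_same (L - L0)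
    rwa [Matrix.conjTranspose_eq_transpose_of_trivial] at this
  rwa [key] at hpsd

/-- Concavity step for the information matrix: the convex combination bound. -/
lemma aux_info_concave {m k : ℕ} {K : Matrix (Fin m) (Fin k) ℝ}
    (hKinj : Function.Injective K.mulVec)
    {M₁ M₂ : Matrix (Fin m) (Fin m) ℝ} (h1 : M₁.PosDef) (h2 : M₂.PosDef)
    {a b : ℝ} (ha : 0 < a) (hb : 0 < b) (hab : a + b = 1) :
    ((Kᵀ * (a • M₁ + b • M₂)⁻¹ * K)⁻¹ -
      (a • (Kᵀ * M₁⁻¹ * K)⁻¹ + b • (Kᵀ * M₂⁻¹ * K)⁻¹)).PosSemidef := by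
  set N : Matrix (Fin m) (Fin m) ℝ := a • M₁ + b • M₂ with hNdef
  have hN : N.PosDef := aux_pd_combo h1 h2 ha.le hb.le hab
  have hGN : (Kᵀ * N⁻¹ * K).PosDef := aux_info_posdef hKinj hN
  letI := hN.isUnit.invertible
  letI := hGN.isUnit.invertible
  set L : Matrix (Fin k) (Fin m) ℝ := (Kᵀ * N⁻¹ * K)⁻¹ * Kᵀ * N⁻¹ with hLdef
  have hLK : L * K = 1 := by
    rw [hLdef]
    calc (Kᵀ * N⁻¹ * K)⁻¹ * Kᵀ * N⁻¹ * K
        = (Kᵀ * N⁻¹ * K)⁻¹ * (Kᵀ * N⁻¹ * K) := by simp only [Matrix.mul_assoc]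
      _ = 1 := Matrix.inv_mul_of_invertible _
  have hLT : Lᵀ = N⁻¹ * (K * (Kᵀ * N⁻¹ * K)⁻¹) := by
    rw [hLdef, Matrix.transpose_mul, Matrix.transpose_mul,
      aux_sym_transpose hN.inv.1, aux_sym_transpose hGN.inv.1,
      Matrix.transpose_transpose, Matrix.mul_assoc]
  have hLNL : L * N * Lᵀ = (Kᵀ * N⁻¹ * K)⁻¹ := by
    rw [hLT, hLdef]
    calc (Kᵀ * N⁻¹ * K)⁻¹ * Kᵀ * N⁻¹ * N * (N⁻¹ * (K * (Kᵀ * N⁻¹ * K)⁻¹))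
        = (Kᵀ * N⁻¹ * K)⁻¹ * (Kᵀ * (N⁻¹ * (N * (N⁻¹ * (K * (Kᵀ * N⁻¹ * K)⁻¹))))) := by
          simp only [Matrix.mul_assoc]
      _ = (Kᵀ * N⁻¹ * K)⁻¹ * (Kᵀ * (N⁻¹ * (K * (Kᵀ * N⁻¹ * K)⁻¹))) := by
          rw [Matrix.inv_mul_cancel_left_of_invertible]
      _ = (Kᵀ * N⁻¹ * K)⁻¹ * ((Kᵀ * N⁻¹ * K) * (Kᵀ * N⁻¹ * K)⁻¹) := by
          simp only [Matrix.mul_assoc]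
      _ = (Kᵀ * N⁻¹ * K)⁻¹ := by rw [Matrix.mul_inv_of_invertible, Matrix.mul_one]
  have hs1 : (L * M₁ * Lᵀ - (Kᵀ * M₁⁻¹ * K)⁻¹).PosSemidef := aux_min_repr hKinj h1 hLK
  have hs2 : (L * M₂ * Lᵀ - (Kᵀ * M₂⁻¹ * K)⁻¹).PosSemidef := aux_min_repr hKinj h2 hLK
  have hdecomp : (Kᵀ * N⁻¹ * K)⁻¹ -
      (a • (Kᵀ * M₁⁻¹ * K)⁻¹ + b • (Kᵀ * M₂⁻¹ * K)⁻¹) =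
      a • (L * M₁ * Lᵀ - (Kᵀ * M₁⁻¹ * K)⁻¹) + b • (L * M₂ * Lᵀ - (Kᵀ * M₂⁻¹ * K)⁻¹) := by
    rw [← hLNL, hNdef]
    rw [Matrix.mul_add, Matrix.add_mul]
    rw [Matrix.mul_smul, Matrix.smul_mul, Matrix.mul_smul, Matrix.smul_mul]
    rw [smul_sub, smul_sub]
    abel
  rw [hdecomp]
  exact (aux_psd_smul hs1 ha.le).add (aux_psd_smul hs2 hb.le)

lemma aux_Mmat_combo {n m : ℕ} (A : Fin n → Matrix (Fin m) (Fin m) ℝ) (a b : ℝ)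
    (x y : Fin n → ℝ) :
    Mmat A (fun i => a * x i + b * y i) = a • Mmat A x + b • Mmat A y := by
  unfold Mmat
  rw [Finset.smul_sum, Finset.smul_sum, ← Finset.sum_add_distrib]
  congr 1
  funext i
  rw [add_smul, smul_smul, smul_smul]

lemma aux_Mmat_psd {n m : ℕ} {A : Fin n → Matrix (Fin m) (Fin m) ℝ}
    (hA : ∀ i, (A i).PosSemidef) {x : Fin n → ℝ} (hx : ∀ i, 0 ≤ x i) :
    (Mmat A x).PosSemidef := by
  unfold Mmat
  refine Finset.sum_induction _ _ (fun a b ha hb => ha.add hb) Matrix.PosSemidef.zero ?_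
  intro i _
  exact aux_psd_smul (hA i) (hx i)

lemma aux_Mmat_pd {n m : ℕ} (hn : 0 < n) {A : Fin n → Matrix (Fin m) (Fin m) ℝ}
    (hA : ∀ i, (A i).PosSemidef) (hex : ∃ w0 ∈ Omega n, (Mmat A w0).PosDef)
    {w : Fin n → ℝ} (hw : ∀ i, 0 < w i) : (Mmat A w).PosDef := by
  obtain ⟨w0, hw0Ω, hw0PD⟩ := hex
  haveI : NeZero n := ⟨hn.ne'⟩
  set ε : ℝ := Finset.univ.inf' (Finset.univ_nonempty) w with hεdef
  have hεle : ∀ i, ε ≤ w i := fun i => Finset.inf'_le _ (Finset.mem_univ i)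
  have hεpos : 0 < ε := by
    obtain ⟨i, _, hi⟩ := Finset.exists_mem_eq_inf' (Finset.univ_nonempty) w
    rw [hεdef, hi]; exact hw i
  have hw0le : ∀ i, w0 i ≤ 1 := by
    intro i
    have := Finset.single_le_sum (f := w0) (fun j _ => hw0Ω.1 j) (Finset.mem_univ i)
    rw [hw0Ω.2] at this
    exact this
  have hnn : ∀ i, 0 ≤ w i - ε * w0 i := by
    intro i
    have h1 : ε * w0 i ≤ ε * 1 := by
      exact mul_le_mul_of_nonneg_left (hw0le i) hεpos.le
    have := hεle i
    nlinarith
  have hdec : Mmat A w = ε • Mmat A w0 + Mmat A (fun i => w i - ε * w0 i) := by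
    have : Mmat A (fun i => ε * w0 i + 1 * (w i - ε * w0 i)) =
        ε • Mmat A w0 + (1:ℝ) • Mmat A (fun i => w i - ε * w0 i) := aux_Mmat_combo A ε (1:ℝ) _ _
    simp only [one_mul, one_smul] at this
    rw [← this]
    congr 1
    funext i
    ring
  rw [hdec]
  exact (aux_pd_smul hw0PD hεpos).add_posSemidef (aux_Mmat_psd hA hnn)

/-- Bound relating a KKT point and a perturbed KKT point:
`(w*)ᵀ u + wᵀ u* ≤ (2C + n) μ`. -/
theorem kkt_perturbed_bound (n m k : ℕ) (hn : 2 ≤ n) (hm : 1 ≤ m) (hk : 1 ≤ k) (hkm : k ≤ m)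
    (A : Fin n → Matrix (Fin m) (Fin m) ℝ) (hA : ∀ i, (A i).PosSemidef)
    (hex : ∃ w ∈ Omega n, (Mmat A w).PosDef)
    (K : Matrix (Fin m) (Fin k) ℝ) (hK : K.rank = k)
    (Ψ : Matrix (Fin k) (Fin k) ℝ → ℝ)
    (hΨ : Assumption1 k Ψ)
    (g : (Fin n → ℝ) → Fin n → ℝ)
    (hg : ∀ w : Fin n → ℝ, (Mmat A w).PosDef →
      HasFDerivAt (fun z => Ψ ((Kᵀ * (Mmat A z)⁻¹ * K)⁻¹))
        (∑ i, g w i • ContinuousLinearMap.proj (R := ℝ) (φ := fun _ : Fin n => ℝ) i) w)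
    (wstar ustar : Fin n → ℝ)
    (hKKT : wstar ∈ Omega n ∧ (Mmat A wstar).PosDef ∧ (∀ i, 0 ≤ ustar i) ∧
      (∀ i, ustar i * wstar i = 0) ∧ ∃ lam : ℝ, ∀ i, g wstar i - ustar i = lam)
    (C : ℝ) (hC : 0 < C) (μ : ℝ) (hμ : 0 < μ) (v : Fin (n - 1) → ℝ)
    (hv : ∀ i, |v i| < C * μ)
    (w u : Fin n → ℝ)
    (hpert : (∀ i, 0 < w i) ∧ (∑ i, w i = 1) ∧ (∀ i, u i * w i = μ) ∧
      ∃ lam : ℝ, ∀ i : Fin n, g w i - u i =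
        lam + (if h : (i : ℕ) < n - 1 then v ⟨i, h⟩ else 0)) :
    ∑ i, wstar i * u i + ∑ i, w i * ustar i ≤ (2 * C + n) * μ := by
  obtain ⟨hwΩ, hMstar, hust_nonneg, hcomp_star, lams, hlams⟩ := hKKT
  obtain ⟨hwpos, hwsum, hcomp, lamp, hlamp⟩ := hpert
  have hnpos : 0 < n := by omega
  have hKinj : Function.Injective K.mulVec := aux_rank_inj hK
  have hMw : (Mmat A w).PosDef := aux_Mmat_pd hnpos hA hex hwpos
  set d : Fin n → ℝ := fun i => w i - wstar i with hd
  set F : (Fin n → ℝ) → ℝ := fun z => Ψ ((Kᵀ * (Mmat A z)⁻¹ * K)⁻¹) with hF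
  set h : ℝ → ℝ := fun t => F (wstar + t • d) with hh
  have hcurve_eq : ∀ t : ℝ, (wstar + t • d) = fun i => (1 - t) * wstar i + t * w i := by
    intro t; funext i
    simp only [Pi.add_apply, Pi.smul_apply, smul_eq_mul, hd]
    ring
  have hMt : ∀ t ∈ Set.Icc (0:ℝ) 1, (Mmat A (wstar + t • d)).PosDef := by
    intro t ht
    rw [hcurve_eq t, aux_Mmat_combo]
    exact aux_pd_combo hMstar hMw (by linarith [ht.2]) ht.1 (by ring)
  -- convexity of h on [0,1]
  have hconv : ConvexOn ℝ (Set.Icc (0:ℝ) 1) h := by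
    refine ⟨convex_Icc 0 1, ?_⟩
    intro x hx y hy a b ha hb hab
    rcases eq_or_lt_of_le ha with rfl | ha'
    · have hb1 : b = 1 := by linarith
      subst hb1
      simp
    rcases eq_or_lt_of_le hb with rfl | hb'
    · have ha1 : a = 1 := by linarith
      subst ha1
      simp
    have hMx : (Mmat A (wstar + x • d)).PosDef := hMt x hx
    have hMy : (Mmat A (wstar + y • d)).PosDef := hMt y hy
    have hwc : wstar + (a * x + b * y) • d =
        fun i => a * ((wstar + x • d) i) + b * ((wstar + y • d) i) := by
      funext i
      simp only [Pi.add_apply, Pi.smul_apply, smul_eq_mul]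
      linear_combination (-(wstar i)) * hab
    have hMc : Mmat A (wstar + (a * x + b * y) • d) =
        a • Mmat A (wstar + x • d) + b • Mmat A (wstar + y • d) := by
      rw [hwc, aux_Mmat_combo]
    have hS := aux_info_concave hKinj hMx hMy ha' hb' hab
    have hCx : ((Kᵀ * (Mmat A (wstar + x • d))⁻¹ * K)⁻¹).PosDef :=
      (aux_info_posdef hKinj hMx).inv
    have hCy : ((Kᵀ * (Mmat A (wstar + y • d))⁻¹ * K)⁻¹).PosDef :=
      (aux_info_posdef hKinj hMy).inv
    have hmixpd : (a • (Kᵀ * (Mmat A (wstar + x • d))⁻¹ * K)⁻¹ +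
        b • (Kᵀ * (Mmat A (wstar + y • d))⁻¹ * K)⁻¹).PosDef :=
      (aux_pd_smul hCx ha').add (aux_pd_smul hCy hb')
    have hCN : ((Kᵀ * (a • Mmat A (wstar + x • d) + b • Mmat A (wstar + y • d))⁻¹ * K)⁻¹).PosDef :=
      (aux_info_posdef hKinj (aux_pd_combo hMx hMy ha'.le hb'.le hab)).inv
    have step1 := hΨ.decreasing _ _ hCN.1 hmixpd hS
    have hba : (1:ℝ) - a = b := by linarith
    have step2 := hΨ.convex _ _ hCx hCy a ha (by linarith)
    rw [hba] at step2
    have hval : h (a • x + b • y) =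
        Ψ ((Kᵀ * (a • Mmat A (wstar + x • d) + b • Mmat A (wstar + y • d))⁻¹ * K)⁻¹) := by
      simp only [hh, hF, smul_eq_mul]
      rw [hMc]
    rw [hval]
    simp only [smul_eq_mul]
    calc Ψ ((Kᵀ * (a • Mmat A (wstar + x • d) + b • Mmat A (wstar + y • d))⁻¹ * K)⁻¹)
        ≤ Ψ (a • (Kᵀ * (Mmat A (wstar + x • d))⁻¹ * K)⁻¹ +
            b • (Kᵀ * (Mmat A (wstar + y • d))⁻¹ * K)⁻¹) := step1
      _ ≤ a * Ψ ((Kᵀ * (Mmat A (wstar + x • d))⁻¹ * K)⁻¹) +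
            b * Ψ ((Kᵀ * (Mmat A (wstar + y • d))⁻¹ * K)⁻¹) := step2
      _ = a * h x + b * h y := rfl
  -- derivatives of h at the endpoints
  have hcurve : ∀ t : ℝ, HasDerivAt (fun s : ℝ => wstar + s • d) d t := by
    intro t
    have h1 : HasDerivAt (fun s : ℝ => s • d) ((1:ℝ) • d) t :=
      (hasDerivAt_id t).smul_const d
    rw [one_smul] at h1
    exact h1.const_add wstar
  have happ : ∀ z : Fin n → ℝ,
      (∑ i, g z i • ContinuousLinearMap.proj (R := ℝ) (φ := fun _ : Fin n => ℝ) i) d =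
        ∑ i, g z i * d i := by
    intro z
    simp [ContinuousLinearMap.sum_apply, ContinuousLinearMap.proj_apply, smul_eq_mul]
  have hD0 : HasDerivAt h (∑ i, g wstar i * d i) 0 := by
    have h0 : wstar + (0:ℝ) • d = wstar := by simp
    have hl : HasFDerivAt F (∑ i, g wstar i • ContinuousLinearMap.proj (R := ℝ)
        (φ := fun _ : Fin n => ℝ) i) ((fun s : ℝ => wstar + s • d) 0) := by
      simp only [h0]
      exact hg wstar hMstar
    have hcmp := hl.comp_hasDerivAt 0 (hcurve 0)
    rw [happ wstar] at hcmp
    exact hcmp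
  have hw1 : wstar + (1:ℝ) • d = w := by
    funext i
    simp only [Pi.add_apply, Pi.smul_apply, smul_eq_mul, hd]
    ring
  have hD1 : HasDerivAt h (∑ i, g w i * d i) 1 := by
    have hl : HasFDerivAt F (∑ i, g w i • ContinuousLinearMap.proj (R := ℝ)
        (φ := fun _ : Fin n => ℝ) i) ((fun s : ℝ => wstar + s • d) 1) := by
      simp only [hw1]
      exact hg w hMw
    have hcmp := hl.comp_hasDerivAt 1 (hcurve 1)
    rw [happ w] at hcmp
    exact hcmp
  -- slope comparisons
  have h0mem : (0:ℝ) ∈ Set.Icc (0:ℝ) 1 := by norm_num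
  have h1mem : (1:ℝ) ∈ Set.Icc (0:ℝ) 1 := by norm_num
  have hslope0 : (∑ i, g wstar i * d i) ≤ h 1 - h 0 := by
    have ht := hasDerivAt_iff_tendsto_slope.mp hD0
    have ht' : Tendsto (slope h 0) (𝓝[>] (0:ℝ)) (𝓝 (∑ i, g wstar i * d i)) :=
      ht.mono_left (nhdsWithin_mono _ (fun x hx => ne_of_gt hx))
    refine le_of_tendsto ht' ?_
    filter_upwards [Ioo_mem_nhdsGT_of_mem (Set.left_mem_Ico.mpr one_pos)] with t ht
    have hs := hconv.secant_mono_aux2 h0mem h1mem ht.1 ht.2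
    rw [slope_def_field]
    calc (h t - h 0) / (t - 0) ≤ (h 1 - h 0) / (1 - 0) := hs
      _ = h 1 - h 0 := by norm_num
  have hslope1 : h 1 - h 0 ≤ ∑ i, g w i * d i := by
    have ht := hasDerivAt_iff_tendsto_slope.mp hD1
    have ht' : Tendsto (slope h 1) (𝓝[<] (1:ℝ)) (𝓝 (∑ i, g w i * d i)) :=
      ht.mono_left (nhdsWithin_mono _ (fun x hx => ne_of_lt hx))
    refine ge_of_tendsto ht' ?_
    filter_upwards [Ioo_mem_nhdsLT_of_mem (Set.right_mem_Ioc.mpr one_pos)] with t ht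
    have hs := hconv.secant_mono_aux3 h0mem h1mem ht.1 ht.2
    rw [slope_def_field]
    have heq : (h t - h 1) / (t - 1) = (h 1 - h t) / (1 - t) := by
      rw [← neg_div_neg_eq]
      ring_nf
    rw [heq]
    calc h 1 - h 0 = (h 1 - h 0) / (1 - 0) := by norm_num
      _ ≤ (h 1 - h t) / (1 - t) := hs
  have mono : ∑ i, g wstar i * d i ≤ ∑ i, g w i * d i := by linarith
  -- the final algebraic bookkeeping
  set v' : Fin n → ℝ := fun j => if hj : (j : ℕ) < n - 1 then v ⟨j, hj⟩ else 0 with hv'def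
  have e : ∀ i, wstar i * u i + w i * ustar i =
      w i * u i + ustar i * wstar i + (g wstar i * d i - g w i * d i) +
      (w i - wstar i) * v' i + (lamp - lams) * (w i - wstar i) := by
    intro i
    have h1 := hlamp i
    have h2 := hlams i
    have hu : u i = g w i - lamp - v' i := by
      rw [hv'def]
      dsimp only
      linarith
    have hus : ustar i = g wstar i - lams := by linarith
    rw [hu, hus, hd]
    ring
  have c1 : ∑ i, w i * u i = (n:ℝ) * μ := by
    have : ∀ i ∈ Finset.univ, w i * u i = μ := fun i _ => by rw [mul_comm]; exact hcomp i
    rw [Finset.sum_congr rfl this]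
    simp [Finset.sum_const, Finset.card_univ, mul_comm]
  have c2 : ∑ i, ustar i * wstar i = 0 :=
    Finset.sum_eq_zero fun i _ => hcomp_star i
  have c5 : ∑ i, (lamp - lams) * (w i - wstar i) = 0 := by
    rw [← Finset.mul_sum, Finset.sum_sub_distrib, hwsum, hwΩ.2]
    ring
  have c4 : ∑ i, (w i - wstar i) * v' i ≤ 2 * C * μ := by
    have hb : ∀ i, (w i - wstar i) * v' i ≤ (w i + wstar i) * (C * μ) := by
      intro i
      have habs : |v' i| ≤ C * μ := by
        rw [hv'def]
        dsimp only
        split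
        · exact (hv _).le
        · simpa using (mul_pos hC hμ).le
      have h1 : (w i - wstar i) * v' i ≤ |w i - wstar i| * |v' i| := by
        calc (w i - wstar i) * v' i ≤ |(w i - wstar i) * v' i| := le_abs_self _
          _ = |w i - wstar i| * |v' i| := abs_mul _ _
      have h2 : |w i - wstar i| ≤ w i + wstar i := by
        calc |w i - wstar i| ≤ |w i| + |wstar i| := abs_sub _ _
          _ = w i + wstar i := by
            rw [abs_of_pos (hwpos i), abs_of_nonneg (hwΩ.1 i)]
      calc (w i - wstar i) * v' i ≤ |w i - wstar i| * |v' i| := h1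
        _ ≤ (w i + wstar i) * (C * μ) :=
            mul_le_mul h2 habs (abs_nonneg _) (by have h3 := hwpos i; have h4 := hwΩ.1 i; linarith)
    calc ∑ i, (w i - wstar i) * v' i ≤ ∑ i, (w i + wstar i) * (C * μ) :=
          Finset.sum_le_sum fun i _ => hb i
      _ = 2 * C * μ := by
          rw [← Finset.sum_mul, Finset.sum_add_distrib, hwsum, hwΩ.2]
          ring
  have total : ∑ i, wstar i * u i + ∑ i, w i * ustar i =
      (n:ℝ) * μ + (∑ i, g wstar i * d i - ∑ i, g w i * d i) +
      ∑ i, (w i - wstar i) * v' i := by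
    rw [← Finset.sum_add_distrib, Finset.sum_congr rfl (fun i _ => e i)]
    simp only [Finset.sum_add_distrib, Finset.sum_sub_distrib]
    rw [c1, c2, ← Finset.mul_sum, Finset.sum_sub_distrib, hwsum, hwΩ.2]
    ring
  have hexp : (2 * C + (n:ℝ)) * μ = 2 * C * μ + (n:ℝ) * μ := by ring
  linarith
end
end

section
/- Suppose Ψ satisfies Assumption 1. Let C > 0, let (w*, u*) solve the KKT system, and let (w, u) solve the perturbed KKT system with parameters μ > 0 and v ∈ ℝ^{n−1} satisfying ‖v‖_∞ < Cμ. Then ∑_{i=1}^n w*_i / w_i + ∑_{i=1}^n u*_i / u_i ≤ 2C + n, and consequently w_i ≥ w*_i/(2C+n) and u_i ≥ u*_i/(2C+n) for every i = 1, …, n. -/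
open Matrix Filter Topology

noncomputable section

attribute [local instance] Matrix.normedAddCommGroup Matrix.normedSpace

namespace KKTAux

lemma herm_transpose_eq {p : ℕ} {M : Matrix (Fin p) (Fin p) ℝ} (h : M.IsHermitian) :
    Mᵀ = M := by
  rw [← Matrix.conjTranspose_eq_transpose_of_trivial]; exact h.eq

lemma isHermitian_of_transpose_eq {p : ℕ} {M : Matrix (Fin p) (Fin p) ℝ} (h : Mᵀ = M) :
    M.IsHermitian := by
  unfold Matrix.IsHermitian
  rw [Matrix.conjTranspose_eq_transpose_of_trivial]; exact h

lemma smul_posSemidef {p : ℕ} {c : ℝ} (hc : 0 ≤ c) {A : Matrix (Fin p) (Fin p) ℝ}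
    (hA : A.PosSemidef) : (c • A).PosSemidef := by
  rw [Matrix.posSemidef_iff_dotProduct_mulVec]
  constructor
  · unfold Matrix.IsHermitian
    rw [Matrix.conjTranspose_smul]
    simp [herm_transpose_eq hA.1]
  · intro x
    rw [Matrix.smul_mulVec, dotProduct_smul, smul_eq_mul]
    exact mul_nonneg hc (hA.dotProduct_mulVec_nonneg x)

lemma smul_posDef {p : ℕ} {c : ℝ} (hc : 0 < c) {A : Matrix (Fin p) (Fin p) ℝ}
    (hA : A.PosDef) : (c • A).PosDef := by
  rw [Matrix.posDef_iff_dotProduct_mulVec]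
  constructor
  · unfold Matrix.IsHermitian
    rw [Matrix.conjTranspose_smul]
    simp [herm_transpose_eq hA.1]
  · intro x hx
    rw [Matrix.smul_mulVec, dotProduct_smul, smul_eq_mul]
    exact mul_pos hc (hA.dotProduct_mulVec_pos hx)

lemma combo_posDef {p : ℕ} {A B : Matrix (Fin p) (Fin p) ℝ} (hA : A.PosDef) (hB : B.PosDef)
    {t : ℝ} (ht0 : 0 ≤ t) (ht1 : t ≤ 1) : (t • A + (1 - t) • B).PosDef := by
  rcases eq_or_lt_of_le ht0 with h | h
  · simp only [← h, zero_smul, zero_add, sub_zero, one_smul]; exact hB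
  · rcases eq_or_lt_of_le ht1 with h1 | h1
    · simp [h1, hA]
    · exact (smul_posDef h hA).add (smul_posDef (by linarith) hB)

lemma dp_shift {p q : ℕ} (P : Matrix (Fin p) (Fin q) ℝ) (x : Fin p → ℝ) (y : Fin q → ℝ) :
    x ⬝ᵥ P *ᵥ y = (Pᵀ *ᵥ x) ⬝ᵥ y := by
  rw [Matrix.dotProduct_mulVec, ← Matrix.vecMul_transpose, Matrix.transpose_transpose]

lemma KtMK_posDef' {m k : ℕ} {M : Matrix (Fin m) (Fin m) ℝ} (hM : M.PosDef)
    {K : Matrix (Fin m) (Fin k) ℝ} (hK : ∀ x : Fin k → ℝ, K *ᵥ x = 0 → x = 0) :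
    (Kᵀ * M * K).PosDef := by
  rw [Matrix.posDef_iff_dotProduct_mulVec]
  constructor
  · apply isHermitian_of_transpose_eq
    rw [Matrix.transpose_mul, Matrix.transpose_mul, Matrix.transpose_transpose,
      herm_transpose_eq hM.1, Matrix.mul_assoc]
  · intro x hx
    have hKx : K *ᵥ x ≠ 0 := fun h => hx (hK x h)
    have : x ⬝ᵥ (Kᵀ * M * K) *ᵥ x = (K *ᵥ x) ⬝ᵥ M *ᵥ (K *ᵥ x) := by
      rw [← Matrix.mulVec_mulVec, ← Matrix.mulVec_mulVec, Matrix.dotProduct_mulVec,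
        Matrix.vecMul_transpose]
    simp only [star_trivial] at *
    rw [this]
    have hpos := hM.dotProduct_mulVec_pos hKx
    simp only [star_trivial] at hpos
    exact hpos

open scoped MatrixOrder in
lemma psd_cauchy_schwarz' {p : ℕ} {M : Matrix (Fin p) (Fin p) ℝ} (hM : M.PosSemidef)
    (a b : Fin p → ℝ) :
    (a ⬝ᵥ M *ᵥ b) ^ 2 ≤ (a ⬝ᵥ M *ᵥ a) * (b ⬝ᵥ M *ᵥ b) := by
  obtain ⟨B, rfl⟩ := CStarAlgebra.nonneg_iff_eq_star_mul_self.mp hM.nonneg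
  rw [Matrix.star_eq_conjTranspose]
  have key : ∀ x y : Fin p → ℝ, x ⬝ᵥ (Bᴴ * B) *ᵥ y = (B *ᵥ x) ⬝ᵥ (B *ᵥ y) := by
    intro x y
    rw [Matrix.conjTranspose_eq_transpose_of_trivial, ← Matrix.mulVec_mulVec,
      Matrix.dotProduct_mulVec, Matrix.vecMul_transpose]
  rw [key, key, key]
  simpa [dotProduct, pow_two] using
    Finset.sum_mul_sq_le_sq_mul_sq Finset.univ (B *ᵥ a) (B *ᵥ b)

lemma lower_bound {m k : ℕ} {M : Matrix (Fin m) (Fin m) ℝ} (hM : M.PosDef)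
    {K : Matrix (Fin m) (Fin k) ℝ} (hK : ∀ x : Fin k → ℝ, K *ᵥ x = 0 → x = 0)
    {L : Matrix (Fin k) (Fin m) ℝ} (hL : L * K = 1) :
    (L * M * Lᵀ - (Kᵀ * M⁻¹ * K)⁻¹).PosSemidef := by
  have hMdet : IsUnit M.det := hM.det_pos.ne'.isUnit
  have hW : (Kᵀ * M⁻¹ * K).PosDef := KtMK_posDef' hM.inv hK
  have hWdet : IsUnit (Kᵀ * M⁻¹ * K).det := hW.det_pos.ne'.isUnit
  set W := Kᵀ * M⁻¹ * K with hWdef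
  set U := W⁻¹ with hUdef
  have hU : U.PosDef := hW.inv
  have hUW : U * W = 1 := Matrix.nonsing_inv_mul W hWdet
  have hMisym : M⁻¹ᵀ = M⁻¹ := herm_transpose_eq hM.inv.1
  have hUsym : Uᵀ = U := herm_transpose_eq hU.1
  have hMMi : M * (M⁻¹ * (K * U)) = K * U := Matrix.mul_nonsing_inv_cancel_left M _ hMdet
  rw [Matrix.posSemidef_iff_dotProduct_mulVec]
  constructor
  · apply Matrix.IsHermitian.sub
    · apply isHermitian_of_transpose_eq
      rw [Matrix.transpose_mul, Matrix.transpose_mul, Matrix.transpose_transpose,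
        herm_transpose_eq hM.1, Matrix.mul_assoc]
    · exact hU.1
  · intro x
    simp only [star_trivial, Matrix.sub_mulVec, dotProduct_sub, sub_nonneg]
    set Q := M⁻¹ * (K * U) with hQdef
    set b := Q *ᵥ x with hbdef
    have h1 : (Lᵀ *ᵥ x) ⬝ᵥ M *ᵥ (Lᵀ *ᵥ x) = x ⬝ᵥ (L * M * Lᵀ) *ᵥ x := by
      rw [← dp_shift L x (M *ᵥ (Lᵀ *ᵥ x)), Matrix.mulVec_mulVec, Matrix.mulVec_mulVec,
        Matrix.mul_assoc]
    have h2 : (Lᵀ *ᵥ x) ⬝ᵥ M *ᵥ b = x ⬝ᵥ U *ᵥ x := by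
      rw [hbdef, Matrix.mulVec_mulVec, ← dp_shift L x, Matrix.mulVec_mulVec]
      congr 1
      rw [hQdef, hMMi, ← Matrix.mul_assoc, hL, Matrix.one_mul]
    have h3 : b ⬝ᵥ M *ᵥ b = x ⬝ᵥ U *ᵥ x := by
      have hd := dp_shift Qᵀ x ((M * Q) *ᵥ x)
      rw [Matrix.transpose_transpose] at hd
      rw [hbdef, Matrix.mulVec_mulVec, ← hd, Matrix.mulVec_mulVec]
      congr 1
      rw [hMMi, hQdef, Matrix.transpose_mul, Matrix.transpose_mul, hMisym, hUsym]
      have hfin : U * Kᵀ * M⁻¹ * (K * U) = U * (Kᵀ * M⁻¹ * K) * U := by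
        simp only [Matrix.mul_assoc]
      rw [hfin, ← hWdef, hUW, Matrix.one_mul]
    have hs0 : 0 ≤ x ⬝ᵥ U *ᵥ x := by
      have := hU.posSemidef.dotProduct_mulVec_nonneg x
      simpa using this
    have hcs := psd_cauchy_schwarz' hM.posSemidef (Lᵀ *ᵥ x) b
    rw [h1, h2, h3] at hcs
    rcases eq_or_lt_of_le hs0 with h | h
    · rw [← h]
      have := hM.posSemidef.dotProduct_mulVec_nonneg (Lᵀ *ᵥ x)
      simp only [star_trivial] at this
      rw [h1] at this
      exact this
    · nlinarith

lemma Lstar_mul {m k : ℕ} {M : Matrix (Fin m) (Fin m) ℝ} (hM : M.PosDef)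
    {K : Matrix (Fin m) (Fin k) ℝ} (hK : ∀ x : Fin k → ℝ, K *ᵥ x = 0 → x = 0) :
    ((Kᵀ * M⁻¹ * K)⁻¹ * Kᵀ * M⁻¹) * M * ((Kᵀ * M⁻¹ * K)⁻¹ * Kᵀ * M⁻¹)ᵀ
      = (Kᵀ * M⁻¹ * K)⁻¹ := by
  have hMdet : IsUnit M.det := hM.det_pos.ne'.isUnit
  have hW : (Kᵀ * M⁻¹ * K).PosDef := KtMK_posDef' hM.inv hK
  set W := Kᵀ * M⁻¹ * K with hWdef
  set U := W⁻¹ with hUdef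
  have hUW : U * W = 1 := Matrix.nonsing_inv_mul W hW.det_pos.ne'.isUnit
  have hMisym : M⁻¹ᵀ = M⁻¹ := herm_transpose_eq hM.inv.1
  have hUsym : Uᵀ = U := herm_transpose_eq hW.inv.1
  have hT : (U * Kᵀ * M⁻¹)ᵀ = M⁻¹ * (K * U) := by
    rw [Matrix.transpose_mul, Matrix.transpose_mul, hMisym, hUsym,
      Matrix.transpose_transpose]
  rw [hT]
  have h1 : U * Kᵀ * M⁻¹ * M * (M⁻¹ * (K * U))
      = U * (Kᵀ * (M⁻¹ * (M * (M⁻¹ * (K * U))))) := by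
    simp only [Matrix.mul_assoc]
  rw [h1, Matrix.nonsing_inv_mul_cancel_left _ _ hMdet]
  have h2 : Kᵀ * (M⁻¹ * (K * U)) = W * U := by
    rw [hWdef]; simp only [Matrix.mul_assoc]
  rw [h2, ← Matrix.mul_assoc, hUW, Matrix.one_mul]

lemma combo_psd {m k : ℕ} {M₁ M₂ : Matrix (Fin m) (Fin m) ℝ} (h₁ : M₁.PosDef) (h₂ : M₂.PosDef)
    {K : Matrix (Fin m) (Fin k) ℝ} (hK : ∀ x : Fin k → ℝ, K *ᵥ x = 0 → x = 0)
    {t : ℝ} (ht0 : 0 ≤ t) (ht1 : t ≤ 1) :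
    ((Kᵀ * (t • M₁ + (1 - t) • M₂)⁻¹ * K)⁻¹
      - (t • (Kᵀ * M₁⁻¹ * K)⁻¹ + (1 - t) • (Kᵀ * M₂⁻¹ * K)⁻¹)).PosSemidef := by
  set Mt := t • M₁ + (1 - t) • M₂ with hMt
  have hMtpd : Mt.PosDef := combo_posDef h₁ h₂ ht0 ht1
  have hWt : (Kᵀ * Mt⁻¹ * K).PosDef := KtMK_posDef' hMtpd.inv hK
  set L := (Kᵀ * Mt⁻¹ * K)⁻¹ * Kᵀ * Mt⁻¹ with hLdef
  have hL : L * K = 1 := by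
    have h1 : L * K = (Kᵀ * Mt⁻¹ * K)⁻¹ * (Kᵀ * Mt⁻¹ * K) := by
      rw [hLdef]; simp only [Matrix.mul_assoc]
    rw [h1, Matrix.nonsing_inv_mul _ hWt.det_pos.ne'.isUnit]
  have hLM : L * Mt * Lᵀ = (Kᵀ * Mt⁻¹ * K)⁻¹ := Lstar_mul hMtpd hK
  have hsplit : (Kᵀ * Mt⁻¹ * K)⁻¹ - (t • (Kᵀ * M₁⁻¹ * K)⁻¹ + (1 - t) • (Kᵀ * M₂⁻¹ * K)⁻¹)
      = t • (L * M₁ * Lᵀ - (Kᵀ * M₁⁻¹ * K)⁻¹)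
        + (1 - t) • (L * M₂ * Lᵀ - (Kᵀ * M₂⁻¹ * K)⁻¹) := by
    rw [← hLM, hMt, Matrix.mul_add, Matrix.mul_smul, Matrix.mul_smul,
      Matrix.add_mul, Matrix.smul_mul, Matrix.smul_mul]
    rw [smul_sub, smul_sub]
    abel
  rw [hsplit]
  exact (smul_posSemidef ht0 (lower_bound h₁ hK hL)).add
    (smul_posSemidef (by linarith) (lower_bound h₂ hK hL))

lemma mulVec_inj {m k : ℕ} {K : Matrix (Fin m) (Fin k) ℝ} (hK : K.rank = k) :
    ∀ x : Fin k → ℝ, K *ᵥ x = 0 → x = 0 := by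
  have h1 := LinearMap.finrank_range_add_finrank_ker K.mulVecLin
  rw [show Module.finrank ℝ (LinearMap.range K.mulVecLin) = k from hK,
    Module.finrank_pi ℝ] at h1
  simp only [Fintype.card_fin] at h1
  have hker : LinearMap.ker K.mulVecLin = ⊥ := by
    apply Submodule.finrank_eq_zero.mp
    omega
  intro x hx
  exact Matrix.ker_mulVecLin_eq_bot_iff.mp hker x hx

lemma Mmat_add_smul {n m : ℕ} (A : Fin n → Matrix (Fin m) (Fin m) ℝ) (a b : ℝ)
    (x y : Fin n → ℝ) :
    Mmat A (a • x + b • y) = a • Mmat A x + b • Mmat A y := by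
  unfold Mmat
  rw [Finset.smul_sum, Finset.smul_sum, ← Finset.sum_add_distrib]
  refine Finset.sum_congr rfl fun i _ => ?_
  simp [add_smul, smul_smul]

lemma Mmat_quad {n m : ℕ} (A : Fin n → Matrix (Fin m) (Fin m) ℝ) (w : Fin n → ℝ)
    (x : Fin m → ℝ) :
    x ⬝ᵥ (Mmat A w) *ᵥ x = ∑ i, w i * (x ⬝ᵥ (A i) *ᵥ x) := by
  unfold Mmat
  let f : Matrix (Fin m) (Fin m) ℝ →+ ℝ :=
    { toFun := fun M => x ⬝ᵥ M *ᵥ x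
      map_zero' := by simp
      map_add' := fun B C => by simp [Matrix.add_mulVec, dotProduct_add] }
  have : x ⬝ᵥ (∑ i, w i • A i) *ᵥ x = f (∑ i, w i • A i) := rfl
  rw [this, map_sum]
  refine Finset.sum_congr rfl fun i _ => ?_
  show x ⬝ᵥ (w i • A i) *ᵥ x = _
  rw [Matrix.smul_mulVec, dotProduct_smul, smul_eq_mul]

lemma Mmat_posDef {n m : ℕ} {A : Fin n → Matrix (Fin m) (Fin m) ℝ}
    (hA : ∀ i, (A i).PosSemidef)
    (hex : ∃ w0, (∀ i, 0 ≤ w0 i) ∧ (Mmat A w0).PosDef)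
    {w : Fin n → ℝ} (hw : ∀ i, 0 < w i) : (Mmat A w).PosDef := by
  obtain ⟨w0, hw0, hpd⟩ := hex
  rw [Matrix.posDef_iff_dotProduct_mulVec]
  constructor
  · apply isHermitian_of_transpose_eq
    unfold Mmat
    rw [Matrix.transpose_sum]
    exact Finset.sum_congr rfl fun i _ => by
      rw [Matrix.transpose_smul, herm_transpose_eq (hA i).1]
  · intro x hx
    simp only [star_trivial]
    rw [Mmat_quad]
    have hq : ∀ i, 0 ≤ x ⬝ᵥ (A i) *ᵥ x := fun i => by simpa using (hA i).dotProduct_mulVec_nonneg x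
    have h0 : (0 : ℝ) < x ⬝ᵥ (Mmat A w0) *ᵥ x := by simpa using hpd.dotProduct_mulVec_pos hx
    rw [Mmat_quad] at h0
    have : ∃ i ∈ Finset.univ, (0 : ℝ) < w0 i * (x ⬝ᵥ (A i) *ᵥ x) := by
      by_contra hcon
      push_neg at hcon
      have : ∑ i, w0 i * (x ⬝ᵥ (A i) *ᵥ x) ≤ 0 :=
        Finset.sum_nonpos fun i hi => hcon i hi
      linarith
    obtain ⟨i, _, hi⟩ := this
    have hqi : 0 < x ⬝ᵥ (A i) *ᵥ x := by
      rcases (hq i).lt_or_eq with h | h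
      · exact h
      · rw [← h, mul_zero] at hi; exact absurd hi (lt_irrefl 0)
    refine Finset.sum_pos' (fun j _ => mul_nonneg (hw j).le (hq j)) ⟨i, Finset.mem_univ i, ?_⟩
    exact mul_pos (hw i) hqi

lemma deriv_mono_of_segment_convex {φ : ℝ → ℝ} {D0 D1 : ℝ}
    (h0 : HasDerivAt φ D0 0) (h1 : HasDerivAt φ D1 1)
    (hconv : ∀ t, 0 ≤ t → t ≤ 1 → φ t ≤ (1 - t) * φ 0 + t * φ 1) :
    D0 ≤ D1 := by
  have key0 : D0 ≤ φ 1 - φ 0 := by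
    have ht : Tendsto (slope φ 0) (𝓝[>] 0) (𝓝 D0) :=
      (hasDerivAt_iff_tendsto_slope.mp h0).mono_left
        (nhdsWithin_mono 0 (fun t ht => ne_of_gt ht))
    refine le_of_tendsto ht ?_
    filter_upwards [Ioc_mem_nhdsGT_of_mem (by simp : (0:ℝ) ∈ Set.Ico (0:ℝ) 1)] with t ht
    obtain ⟨ht0, ht1⟩ := ht
    have := hconv t ht0.le ht1
    rw [slope_def_field]
    rw [sub_zero, div_le_iff₀ ht0]
    nlinarith
  have key1 : φ 1 - φ 0 ≤ D1 := by
    have ht : Tendsto (slope φ 1) (𝓝[<] 1) (𝓝 D1) :=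
      (hasDerivAt_iff_tendsto_slope.mp h1).mono_left
        (nhdsWithin_mono 1 (fun t ht => ne_of_lt ht))
    refine ge_of_tendsto ht ?_
    filter_upwards [Ico_mem_nhdsLT_of_mem (by simp : (1:ℝ) ∈ Set.Ioc (0:ℝ) 1)] with t ht
    obtain ⟨ht0, ht1⟩ := ht
    have hc := hconv t ht0 ht1.le
    rw [slope_def_field]
    rw [le_div_iff_of_neg (by linarith : t - 1 < 0)]
    nlinarith
  linarith

end KKTAux

/-- Bound relating a KKT point and a perturbed KKT point:
`∑ w*_i / w_i + ∑ u*_i / u_i ≤ 2C + n`, hence componentwise lower bounds. -/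
theorem kkt_perturbed_ratio_bound (n m k : ℕ) (hn : 2 ≤ n) (hm : 1 ≤ m) (hk : 1 ≤ k) (hkm : k ≤ m)
    (A : Fin n → Matrix (Fin m) (Fin m) ℝ) (hA : ∀ i, (A i).PosSemidef)
    (hex : ∃ w ∈ Omega n, (Mmat A w).PosDef)
    (K : Matrix (Fin m) (Fin k) ℝ) (hK : K.rank = k)
    (Ψ : Matrix (Fin k) (Fin k) ℝ → ℝ)
    (hΨ : Assumption1 k Ψ)
    (g : (Fin n → ℝ) → Fin n → ℝ)
    (hg : ∀ w : Fin n → ℝ, (Mmat A w).PosDef →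
      HasFDerivAt (fun z => Ψ ((Kᵀ * (Mmat A z)⁻¹ * K)⁻¹))
        (∑ i, g w i • ContinuousLinearMap.proj (R := ℝ) (φ := fun _ : Fin n => ℝ) i) w)
    (wstar ustar : Fin n → ℝ)
    (hKKT : wstar ∈ Omega n ∧ (Mmat A wstar).PosDef ∧ (∀ i, 0 ≤ ustar i) ∧
      (∀ i, ustar i * wstar i = 0) ∧ ∃ lam : ℝ, ∀ i, g wstar i - ustar i = lam)
    (C : ℝ) (hC : 0 < C) (μ : ℝ) (hμ : 0 < μ) (v : Fin (n - 1) → ℝ)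
    (hv : ∀ i, |v i| < C * μ)
    (w u : Fin n → ℝ)
    (hpert : (∀ i, 0 < w i) ∧ (∑ i, w i = 1) ∧ (∀ i, u i * w i = μ) ∧
      ∃ lam : ℝ, ∀ i : Fin n, g w i - u i =
        lam + (if h : (i : ℕ) < n - 1 then v ⟨i, h⟩ else 0)) :
    (∑ i, wstar i / w i + ∑ i, ustar i / u i ≤ 2 * C + n) ∧
      (∀ i, wstar i / (2 * C + n) ≤ w i) ∧ (∀ i, ustar i / (2 * C + n) ≤ u i) := by
  obtain ⟨hwsΩ, hMs, hus, husws, lams, hlams⟩ := hKKT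
  obtain ⟨hwpos, hwsum, huw, lam, hlam⟩ := hpert
  have hKinj : ∀ x : Fin k → ℝ, K *ᵥ x = 0 → x = 0 := KKTAux.mulVec_inj hK
  have hex' : ∃ w0, (∀ i, 0 ≤ w0 i) ∧ (Mmat A w0).PosDef := by
    obtain ⟨w0, hw0Ω, hpd⟩ := hex; exact ⟨w0, hw0Ω.1, hpd⟩
  have hMw : (Mmat A w).PosDef := KKTAux.Mmat_posDef hA hex' hwpos
  set d : Fin n → ℝ := w - wstar with hd
  set zf : ℝ → Fin n → ℝ := fun t => wstar + t • d with hzf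
  have hz0 : zf 0 = wstar := by simp [hzf]
  have hz1 : zf 1 = w := by simp [hzf, hd]
  have hzM : ∀ t : ℝ, Mmat A (zf t) = t • Mmat A w + (1 - t) • Mmat A wstar := by
    intro t
    have hzeq : zf t = (1 - t) • wstar + t • w := by
      funext i
      simp only [hzf, hd, Pi.add_apply, Pi.smul_apply, Pi.sub_apply, smul_eq_mul]
      ring
    rw [hzeq, KKTAux.Mmat_add_smul, add_comm]
  have hzPD : ∀ t : ℝ, 0 ≤ t → t ≤ 1 → (Mmat A (zf t)).PosDef := fun t h0 h1 => by
    rw [hzM]; exact KKTAux.combo_posDef hMw hMs h0 h1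
  set φ : ℝ → ℝ := fun t => Ψ ((Kᵀ * (Mmat A (zf t))⁻¹ * K)⁻¹) with hφ
  have hderiv : ∀ t : ℝ, (Mmat A (zf t)).PosDef →
      HasDerivAt φ (∑ i, g (zf t) i * d i) t := by
    intro t hpd
    have hz : HasDerivAt zf d t := by
      have := ((hasDerivAt_id t).smul_const d).const_add wstar
      simpa [hzf] using this
    have hF := (hg (zf t) hpd).comp_hasDerivAt t hz
    refine hF.congr_deriv ?_
    simp [ContinuousLinearMap.sum_apply, ContinuousLinearMap.smul_apply,
      ContinuousLinearMap.proj_apply]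
  have hU1 : ((Kᵀ * (Mmat A w)⁻¹ * K)⁻¹).PosDef := (KKTAux.KtMK_posDef' hMw.inv hKinj).inv
  have hU2 : ((Kᵀ * (Mmat A wstar)⁻¹ * K)⁻¹).PosDef := (KKTAux.KtMK_posDef' hMs.inv hKinj).inv
  have he0 : φ 0 = Ψ ((Kᵀ * (Mmat A wstar)⁻¹ * K)⁻¹) := by rw [hφ]; simp only [hz0]
  have he1 : φ 1 = Ψ ((Kᵀ * (Mmat A w)⁻¹ * K)⁻¹) := by rw [hφ]; simp only [hz1]
  have hconv : ∀ t, 0 ≤ t → t ≤ 1 → φ t ≤ (1 - t) * φ 0 + t * φ 1 := by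
    intro t h0 h1
    have hUt : ((Kᵀ * (Mmat A (zf t))⁻¹ * K)⁻¹).PosDef :=
      (KKTAux.KtMK_posDef' (hzPD t h0 h1).inv hKinj).inv
    have hpsd := KKTAux.combo_psd hMw hMs hKinj h0 h1
    rw [← hzM t] at hpsd
    have hmono := hΨ.decreasing _ _ hUt.1 (KKTAux.combo_posDef hU1 hU2 h0 h1) hpsd
    have hcvx := hΨ.convex _ _ hU1 hU2 t h0 h1
    have het : φ t = Ψ ((Kᵀ * (Mmat A (zf t))⁻¹ * K)⁻¹) := by rw [hφ]
    rw [he0, he1, het]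
    linarith
  have hD0 : HasDerivAt φ (∑ i, g wstar i * d i) 0 := by
    have h := hderiv 0 (by rw [hz0]; exact hMs)
    rw [hz0] at h; exact h
  have hD1 : HasDerivAt φ (∑ i, g w i * d i) 1 := by
    have h := hderiv 1 (by rw [hz1]; exact hMw)
    rw [hz1] at h; exact h
  have hmonoD : (∑ i, g wstar i * d i) ≤ ∑ i, g w i * d i :=
    KKTAux.deriv_mono_of_segment_convex hD0 hD1 hconv
  -- arithmetic part
  set vv : Fin n → ℝ := fun i => if h : (i : ℕ) < n - 1 then v ⟨i, h⟩ else 0 with hvv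
  have hgw : ∀ i, g w i = lam + vv i + u i := by
    intro i
    have := hlam i
    simp only [hvv]
    linarith
  have hgs : ∀ i, g wstar i = lams + ustar i := by
    intro i
    have := hlams i
    linarith
  have hsum_ws : ∑ i, wstar i = 1 := hwsΩ.2
  have hD0eq : (∑ i, g wstar i * d i) = ∑ i, ustar i * w i := by
    calc (∑ i, g wstar i * d i)
        = ∑ i, (lams * (w i - wstar i) + (ustar i * w i - ustar i * wstar i)) := by
          refine Finset.sum_congr rfl fun i _ => ?_
          rw [hgs i]
          simp only [hd, Pi.sub_apply]
          ring
      _ = lams * ((∑ i, w i) - ∑ i, wstar i)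
          + ((∑ i, ustar i * w i) - ∑ i, ustar i * wstar i) := by
          simp only [Finset.sum_add_distrib, Finset.sum_sub_distrib, ← Finset.mul_sum]
      _ = ∑ i, ustar i * w i := by
          rw [hwsum, hsum_ws]
          have hz : ∑ i, ustar i * wstar i = 0 := Finset.sum_eq_zero fun i _ => husws i
          rw [hz]
          ring
  have huwsum : ∑ i, u i * w i = (n : ℝ) * μ := by
    rw [Finset.sum_congr rfl fun i _ => huw i]
    simp [Finset.sum_const, Finset.card_univ, mul_comm]
  have hD1eq : (∑ i, g w i * d i)
      = (∑ i, vv i * (w i - wstar i)) + (n : ℝ) * μ - ∑ i, u i * wstar i := by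
    calc (∑ i, g w i * d i)
        = ∑ i, (lam * (w i - wstar i) + vv i * (w i - wstar i)
            + (u i * w i - u i * wstar i)) := by
          refine Finset.sum_congr rfl fun i _ => ?_
          rw [hgw i]
          simp only [hd, Pi.sub_apply]
          ring
      _ = lam * ((∑ i, w i) - ∑ i, wstar i) + (∑ i, vv i * (w i - wstar i))
          + ((∑ i, u i * w i) - ∑ i, u i * wstar i) := by
          simp only [Finset.sum_add_distrib, Finset.sum_sub_distrib, ← Finset.mul_sum]
      _ = (∑ i, vv i * (w i - wstar i)) + (n : ℝ) * μ - ∑ i, u i * wstar i := by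
          rw [hwsum, hsum_ws, huwsum]
          ring
  have hV : (∑ i, vv i * (w i - wstar i)) ≤ 2 * C * μ := by
    have hCμ : 0 < C * μ := mul_pos hC hμ
    calc (∑ i, vv i * (w i - wstar i)) ≤ ∑ i, C * μ * (w i + wstar i) := by
          refine Finset.sum_le_sum fun i _ => ?_
          have h1 : |vv i| ≤ C * μ := by
            simp only [hvv]
            split
            · exact (hv _).le
            · simpa using hCμ.le
          have h2 : |w i - wstar i| ≤ w i + wstar i := by
            rw [abs_le]
            constructor
            · linarith [hwpos i, hwsΩ.1 i]
            · linarith [hwpos i, hwsΩ.1 i]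
          calc vv i * (w i - wstar i) ≤ |vv i * (w i - wstar i)| := le_abs_self _
            _ = |vv i| * |w i - wstar i| := abs_mul _ _
            _ ≤ (C * μ) * (w i + wstar i) :=
                mul_le_mul h1 h2 (abs_nonneg _) hCμ.le
      _ = C * μ * ((∑ i, w i) + ∑ i, wstar i) := by
          rw [← Finset.mul_sum, Finset.sum_add_distrib]
      _ = 2 * C * μ := by rw [hwsum, hsum_ws]; ring
  have key : (∑ i, u i * wstar i) + (∑ i, ustar i * w i) ≤ (n : ℝ) * μ + 2 * C * μ := by
    rw [hD0eq, hD1eq] at hmonoD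
    linarith
  have upos : ∀ i, 0 < u i := by
    intro i
    by_contra hcon
    push_neg at hcon
    have : u i * w i ≤ 0 := mul_nonpos_of_nonpos_of_nonneg hcon (hwpos i).le
    rw [huw i] at this
    linarith
  have ratio1 : ∀ i, wstar i / w i = u i * wstar i / μ := by
    intro i
    rw [div_eq_div_iff (hwpos i).ne' hμ.ne']
    calc wstar i * μ = wstar i * (u i * w i) := by rw [huw i]
      _ = u i * wstar i * w i := by ring
  have ratio2 : ∀ i, ustar i / u i = ustar i * w i / μ := by
    intro i
    rw [div_eq_div_iff (upos i).ne' hμ.ne']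
    calc ustar i * μ = ustar i * (u i * w i) := by rw [huw i]
      _ = ustar i * w i * u i := by ring
  have hsumeq : (∑ i, wstar i / w i) + (∑ i, ustar i / u i)
      = ((∑ i, u i * wstar i) + (∑ i, ustar i * w i)) / μ := by
    rw [Finset.sum_congr rfl fun i _ => ratio1 i, Finset.sum_congr rfl fun i _ => ratio2 i,
      ← Finset.sum_div, ← Finset.sum_div, ← add_div]
  have main1 : (∑ i, wstar i / w i) + (∑ i, ustar i / u i) ≤ 2 * C + n := by
    rw [hsumeq, div_le_iff₀ hμ]
    nlinarith [key]
  have hterm1 : ∀ i, 0 ≤ wstar i / w i := fun i => div_nonneg (hwsΩ.1 i) (hwpos i).le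
  have hterm2 : ∀ i, 0 ≤ ustar i / u i := fun i => div_nonneg (hus i) (upos i).le
  have hpos2Cn : (0 : ℝ) < 2 * C + n := by
    have h2 : (2 : ℝ) ≤ (n : ℝ) := by exact_mod_cast hn
    linarith
  refine ⟨main1, ?_, ?_⟩
  · intro i
    have hle : wstar i / w i ≤ 2 * C + n := by
      have h1 : wstar i / w i ≤ ∑ j, wstar j / w j :=
        Finset.single_le_sum (fun j _ => hterm1 j) (Finset.mem_univ i)
      have h2 : 0 ≤ ∑ j, ustar j / u j := Finset.sum_nonneg fun j _ => hterm2 j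
      linarith
    rw [div_le_iff₀ hpos2Cn]
    rw [div_le_iff₀ (hwpos i)] at hle
    nlinarith
  · intro i
    have hle : ustar i / u i ≤ 2 * C + n := by
      have h1 : ustar i / u i ≤ ∑ j, ustar j / u j :=
        Finset.single_le_sum (fun j _ => hterm2 j) (Finset.mem_univ i)
      have h2 : 0 ≤ ∑ j, wstar j / w j := Finset.sum_nonneg fun j _ => hterm1 j
      linarith
    rw [div_le_iff₀ hpos2Cn]
    rw [div_le_iff₀ (upos i)] at hle
    nlinarith
end
end

section
/- Define Φ_D(X) = log det(K^T X^{-1} K) for m×m real symmetric positive definite X. Then for every positive definite X, the quadratic form H ↦ D²Φ_D(X)[H,H] is nonnegative on S^m, it vanishes at H ∈ S^m if and only if K^T X^{-1} H = 0, and the set {H ∈ S^m : D²Φ_D(X)[H,H] = 0} is a linear subspace of S^m of dimension (m−k)(m−k+1)/2; equivalently, the Hessian of Φ_D at X, viewed as a linear map on the m(m+1)/2-dimensional space S^m, has rank m(m+1)/2 − (m−k)(m−k+1)/2. -/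
open Matrix

noncomputable section

/-- The directional derivative formula `DΦ_D(Y)[H] = -tr (Y⁻¹ K (Kᵀ Y⁻¹ K)⁻¹ Kᵀ Y⁻¹ H)` of
the D-criterion. -/
def D1D {m k : ℕ} (K : Matrix (Fin m) (Fin k) ℝ) (Y H : Matrix (Fin m) (Fin m) ℝ) : ℝ :=
  -((Y⁻¹ * K * (Kᵀ * Y⁻¹ * K)⁻¹ * Kᵀ * Y⁻¹ * H).trace)

section
open scoped MatrixOrder in
lemma psd_sqrt_exists {k : ℕ} (A : Matrix (Fin k) (Fin k) ℝ) (hA : A.PosSemidef) :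
    ∃ S : Matrix (Fin k) (Fin k) ℝ, S * S = A ∧ Sᵀ = S := by
  refine ⟨CFC.sqrt A, CFC.sqrt_mul_sqrt_self A hA.nonneg, ?_⟩
  rw [← Matrix.conjTranspose_eq_transpose_of_trivial]
  exact (CFC.sqrt_nonneg A).posSemidef.1
end

namespace DCrit

attribute [local instance] Matrix.linftyOpNormedAddCommGroup Matrix.linftyOpNormedSpace
  Matrix.linftyOpNormedRing Matrix.linftyOpNormedAlgebra

variable {a b c d n : ℕ}

def sandwichL (P : Matrix (Fin a) (Fin b) ℝ) (Q : Matrix (Fin c) (Fin d) ℝ) :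
    Matrix (Fin b) (Fin c) ℝ →ₗ[ℝ] Matrix (Fin a) (Fin d) ℝ where
  toFun M := P * M * Q
  map_add' M N := by
    show P * (M + N) * Q = P * M * Q + P * N * Q
    rw [Matrix.mul_add, Matrix.add_mul]
  map_smul' r M := by
    show P * (r • M) * Q = r • (P * M * Q)
    rw [Matrix.mul_smul, Matrix.smul_mul]

lemma hasDerivAt_sandwich (P : Matrix (Fin a) (Fin b) ℝ) (Q : Matrix (Fin c) (Fin d) ℝ)
    {f : ℝ → Matrix (Fin b) (Fin c) ℝ} {f' : Matrix (Fin b) (Fin c) ℝ} {x : ℝ}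
    (hf : HasDerivAt f f' x) :
    HasDerivAt (fun t => P * f t * Q) (P * f' * Q) x :=
  ((sandwichL P Q).toContinuousLinearMap.hasFDerivAt (x := f x)).comp_hasDerivAt x hf

lemma hasDerivAt_trace {f : ℝ → Matrix (Fin n) (Fin n) ℝ} {f' : Matrix (Fin n) (Fin n) ℝ} {x : ℝ}
    (hf : HasDerivAt f f' x) :
    HasDerivAt (fun t => (f t).trace) f'.trace x :=
  (((Matrix.traceLinearMap (Fin n) ℝ ℝ).toContinuousLinearMap.hasFDerivAt
    (x := f x))).comp_hasDerivAt x hf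

lemma hasDerivAt_inverse {f : ℝ → Matrix (Fin n) (Fin n) ℝ} {f' : Matrix (Fin n) (Fin n) ℝ}
    {x : ℝ} (hf : HasDerivAt f f' x) (hu : IsUnit (f x)) :
    HasDerivAt (fun t => Ring.inverse (f t)) (-((f x)⁻¹ * f' * (f x)⁻¹)) x := by
  have h1 : HasFDerivAt Ring.inverse
      (-(ContinuousLinearMap.mulLeftRight ℝ _ (↑hu.unit⁻¹) ↑hu.unit⁻¹)) (f x) := by
    simpa only [hu.unit_spec] using hasFDerivAt_ringInverse hu.unit
  have h2 := h1.comp_hasDerivAt x hf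
  have h3 : (↑hu.unit⁻¹ : Matrix (Fin n) (Fin n) ℝ) = (f x)⁻¹ := by
    have h4 := Ring.inverse_unit hu.unit
    rw [hu.unit_spec] at h4
    rw [Matrix.nonsing_inv_eq_ringInverse]
    exact h4.symm
  simp only [h3, Function.comp_def] at h2
  exact h2

lemma hasDerivAt_main {m k : ℕ} (K : Matrix (Fin m) (Fin k) ℝ) (X H : Matrix (Fin m) (Fin m) ℝ)
    (hXu : IsUnit X) (hAu : IsUnit (Kᵀ * X⁻¹ * K))
    (Y B : Matrix (Fin m) (Fin m) ℝ) (hY : Y = X⁻¹)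
    (hB : B = X⁻¹ * K * (Kᵀ * X⁻¹ * K)⁻¹ * Kᵀ * X⁻¹) :
    HasDerivAt
      (fun t : ℝ => -((X + t • H)⁻¹ * K * (Kᵀ * (X + t • H)⁻¹ * K)⁻¹ * Kᵀ * (X + t • H)⁻¹ * H).trace)
      ((Y * H * (B * H)).trace + (B * H * (Y * H)).trace - (B * H * (B * H)).trace) 0 := by
  have hg : HasDerivAt (fun t : ℝ => X + t • H) H 0 := by
    have := ((hasDerivAt_id (0:ℝ)).smul_const H).const_add X
    simp only [one_smul] at this
    exact this
  have hg0 : X + (0:ℝ) • H = X := by simp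
  have h2 : HasDerivAt (fun t : ℝ => Ring.inverse (X + t • H)) (-(X⁻¹ * H * X⁻¹)) 0 := by
    have := hasDerivAt_inverse hg (by rwa [hg0])
    rwa [hg0] at this
  have h3 : HasDerivAt (fun t : ℝ => Kᵀ * Ring.inverse (X + t • H) * K)
      (Kᵀ * -(X⁻¹ * H * X⁻¹) * K) 0 := hasDerivAt_sandwich Kᵀ K h2
  have hA0 : Kᵀ * Ring.inverse (X + (0:ℝ) • H) * K = Kᵀ * X⁻¹ * K := by
    rw [hg0, Matrix.nonsing_inv_eq_ringInverse]
  have h4 : HasDerivAt (fun t : ℝ => Ring.inverse (Kᵀ * Ring.inverse (X + t • H) * K))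
      (-((Kᵀ * X⁻¹ * K)⁻¹ * (Kᵀ * -(X⁻¹ * H * X⁻¹) * K) * (Kᵀ * X⁻¹ * K)⁻¹)) 0 := by
    have := hasDerivAt_inverse h3 (by rwa [hA0])
    rwa [hA0] at this
  have h5 := hasDerivAt_sandwich K Kᵀ h4
  have h6 := h2.mul_const H
  have h7 := (h2.mul h5).mul h6
  have h8 := (hasDerivAt_trace h7).neg
  simp only [hg0, ← Matrix.nonsing_inv_eq_ringInverse, Pi.mul_apply] at h8
  have h9 : HasDerivAt
      (fun t : ℝ =>
        -((X + t • H)⁻¹ * K * (Kᵀ * (X + t • H)⁻¹ * K)⁻¹ * Kᵀ * (X + t • H)⁻¹ * H).trace)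
      (-((-(X⁻¹ * H * X⁻¹) * (K * (Kᵀ * X⁻¹ * K)⁻¹ * Kᵀ) +
            X⁻¹ * (K * -((Kᵀ * X⁻¹ * K)⁻¹ * (Kᵀ * -(X⁻¹ * H * X⁻¹) * K) * (Kᵀ * X⁻¹ * K)⁻¹) * Kᵀ)) *
              (X⁻¹ * H) +
            X⁻¹ * (K * (Kᵀ * X⁻¹ * K)⁻¹ * Kᵀ) * (-(X⁻¹ * H * X⁻¹) * H)).trace) 0 := by
    refine h8.congr_of_eventuallyEq (Filter.Eventually.of_forall fun t => ?_)
    simp only [Matrix.mul_assoc, Pi.neg_apply]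
  convert h9 using 1
  subst hY hB
  simp only [Matrix.mul_assoc, Matrix.neg_mul, Matrix.mul_neg, neg_neg, Matrix.add_mul,
    Matrix.mul_add, Matrix.trace_add, Matrix.trace_neg, Matrix.trace_sub]
  ring

lemma trace_conj_eq {p q : ℕ} (S : Matrix (Fin p) (Fin p) ℝ) (E : Matrix (Fin p) (Fin q) ℝ) :
    (Eᵀ * S * E).trace = (S * (E * Eᵀ)).trace := by
  rw [Matrix.mul_assoc, Matrix.trace_mul_comm, Matrix.mul_assoc]

lemma trace_conj_apply {p q : ℕ} (S : Matrix (Fin p) (Fin p) ℝ) (E : Matrix (Fin p) (Fin q) ℝ)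
    (j : Fin q) : (Eᵀ * S * E) j j = (fun i => E i j) ⬝ᵥ S *ᵥ (fun i => E i j) := by
  simp only [Matrix.mul_apply, Matrix.transpose_apply, dotProduct, Matrix.mulVec,
    Finset.sum_mul, Finset.mul_sum]
  rw [Finset.sum_comm]
  congr 1; ext i; congr 1; ext l; ring

lemma trace_conj_nonneg {p q : ℕ} {S : Matrix (Fin p) (Fin p) ℝ} (hS : S.PosSemidef)
    (E : Matrix (Fin p) (Fin q) ℝ) : 0 ≤ (Eᵀ * S * E).trace := by
  rw [Matrix.trace]
  refine Finset.sum_nonneg fun j _ => ?_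
  have := hS.dotProduct_mulVec_nonneg (fun i => E i j)
  simpa [Matrix.diag, trace_conj_apply, star_trivial] using this

lemma trace_conj_eq_zero_iff {p q : ℕ} {S : Matrix (Fin p) (Fin p) ℝ} (hS : S.PosDef)
    (E : Matrix (Fin p) (Fin q) ℝ) : (Eᵀ * S * E).trace = 0 ↔ E = 0 := by
  constructor
  · intro h
    have hcol : ∀ j, (fun i => E i j) = (0 : Fin p → ℝ) := by
      intro j
      by_contra hne
      have hpos : 0 < (Eᵀ * S * E) j j := by
        have := hS.dotProduct_mulVec_pos hne
        simpa [trace_conj_apply, star_trivial] using this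
      have hnn : ∀ i ∈ Finset.univ, 0 ≤ (Eᵀ * S * E).diag i := by
        intro i _
        have := hS.posSemidef.dotProduct_mulVec_nonneg (fun l => E l i)
        simpa [Matrix.diag, trace_conj_apply, star_trivial] using this
      have h0 : (Eᵀ * S * E).diag j = 0 := by
        have := (Finset.sum_eq_zero_iff_of_nonneg hnn).mp h j (Finset.mem_univ j)
        exact this
      simp [Matrix.diag] at h0
      exact absurd h0 (ne_of_gt hpos)
    ext i j
    exact congrFun (hcol j) i
  · intro h; simp [h]

lemma quad_props {m k : ℕ} (K : Matrix (Fin m) (Fin k) ℝ) (X H : Matrix (Fin m) (Fin m) ℝ)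
    (hX : X.PosDef) (hA : (Kᵀ * X⁻¹ * K).PosDef) (hH : Hᵀ = H)
    (Y B : Matrix (Fin m) (Fin m) ℝ) (hY : Y = X⁻¹)
    (hB : B = X⁻¹ * K * (Kᵀ * X⁻¹ * K)⁻¹ * Kᵀ * X⁻¹) :
    0 ≤ (Y * H * (B * H)).trace + (B * H * (Y * H)).trace - (B * H * (B * H)).trace ∧
    ((Y * H * (B * H)).trace + (B * H * (Y * H)).trace - (B * H * (B * H)).trace = 0 ↔
      Kᵀ * X⁻¹ * H = 0) := by
  have hXdet : IsUnit X.det := hX.det_pos.ne'.isUnit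
  have hAdet : IsUnit (Kᵀ * X⁻¹ * K).det := hA.det_pos.ne'.isUnit
  have hY' : (X⁻¹).PosDef := hX.inv
  have hYt : (X⁻¹)ᵀ = X⁻¹ := by
    rw [← Matrix.conjTranspose_eq_transpose_of_trivial]; exact hY'.1
  have hAt : (Kᵀ * X⁻¹ * K)ᵀ = Kᵀ * X⁻¹ * K := by
    rw [← Matrix.conjTranspose_eq_transpose_of_trivial]; exact hA.1
  have hAit : ((Kᵀ * X⁻¹ * K)⁻¹)ᵀ = (Kᵀ * X⁻¹ * K)⁻¹ := by
    rw [Matrix.transpose_nonsing_inv, hAt]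
  have hXt : Xᵀ = X := by
    rw [← Matrix.conjTranspose_eq_transpose_of_trivial]; exact hX.1
  -- cancellation rules
  have c1 : ∀ Z : Matrix (Fin m) (Fin m) ℝ, X * (X⁻¹ * Z) = Z := by
    intro Z; rw [← Matrix.mul_assoc, Matrix.mul_nonsing_inv X hXdet, Matrix.one_mul]
  have c2 : ∀ Z : Matrix (Fin m) (Fin m) ℝ, X⁻¹ * (X * Z) = Z := by
    intro Z; rw [← Matrix.mul_assoc, Matrix.nonsing_inv_mul X hXdet, Matrix.one_mul]
  have hAdet' : IsUnit (Kᵀ * (X⁻¹ * K)).det := by rwa [← Matrix.mul_assoc]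
  have c3 : ∀ Z : Matrix (Fin k) (Fin m) ℝ,
      (Kᵀ * (X⁻¹ * K))⁻¹ * (Kᵀ * (X⁻¹ * (K * Z))) = Z := by
    intro Z
    calc (Kᵀ * (X⁻¹ * K))⁻¹ * (Kᵀ * (X⁻¹ * (K * Z)))
        = ((Kᵀ * (X⁻¹ * K))⁻¹ * (Kᵀ * (X⁻¹ * K))) * Z := by simp only [Matrix.mul_assoc]
      _ = Z := by rw [Matrix.nonsing_inv_mul _ hAdet', Matrix.one_mul]
  -- square root of A⁻¹
  obtain ⟨S, hSS, hSt⟩ := psd_sqrt_exists _ hA.inv.posSemidef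
  have c4 : ∀ Z : Matrix (Fin k) (Fin m) ℝ, S * (S * Z) = (Kᵀ * X⁻¹ * K)⁻¹ * Z := by
    intro Z; rw [← Matrix.mul_assoc, hSS]
  have hSu : IsUnit S := by
    refine IsUnit.of_mul_eq_one (S * (Kᵀ * X⁻¹ * K)) ?_
    rw [← Matrix.mul_assoc, hSS, Matrix.nonsing_inv_mul _ hAdet]
  have hSdet : IsUnit S.det := (Matrix.isUnit_iff_isUnit_det S).mp hSu
  -- the factor C with C * Cᵀ = B
  set C : Matrix (Fin m) (Fin k) ℝ := X⁻¹ * K * S with hCdef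
  have hCt : Cᵀ = S * (Kᵀ * X⁻¹) := by
    rw [hCdef, Matrix.transpose_mul, Matrix.transpose_mul, hSt, hYt]
  have hCC : C * Cᵀ = B := by
    rw [hCdef, hCt, hB]
    simp only [Matrix.mul_assoc, c4]
  -- E := H * C
  set E : Matrix (Fin m) (Fin k) ℝ := H * C with hEdef
  have hEt : Eᵀ = Cᵀ * H := by rw [hEdef, Matrix.transpose_mul, hH]
  have hEE : E * Eᵀ = H * (B * H) := by
    rw [hEdef, hEt, ← hCC]
    simp only [Matrix.mul_assoc]
  -- T1
  have hT1 : (Eᵀ * X⁻¹ * E).trace = (Y * H * (B * H)).trace := by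
    rw [trace_conj_eq, hEE, hY, ← Matrix.mul_assoc]
  -- Y - B is PSD: Y - B = Fᵀ * Y * F with F = 1 - X * B
  have hBt : Bᵀ = B := by
    rw [hB]
    simp only [Matrix.transpose_mul, hYt, hAit, Matrix.transpose_transpose]
    simp only [Matrix.mul_assoc]
  set F : Matrix (Fin m) (Fin m) ℝ := 1 - X * B with hFdef
  have hFt : Fᵀ = 1 - B * X := by
    rw [hFdef, Matrix.transpose_sub, Matrix.transpose_one, Matrix.transpose_mul, hBt, hXt]
  have hYB : Fᵀ * X⁻¹ * F = X⁻¹ - B := by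
    rw [hFt, hFdef]
    simp only [Matrix.sub_mul, Matrix.mul_sub, Matrix.one_mul, Matrix.mul_one]
    rw [hB]
    simp only [Matrix.mul_assoc, c1, c2, c3]
    abel
  have hYBpsd : (X⁻¹ - B).PosSemidef := by
    have h1 : (Fᵀ * X⁻¹ * (Fᵀ)ᴴ).PosSemidef := hY'.posSemidef.mul_mul_conjTranspose_same Fᵀ
    rw [Matrix.conjTranspose_eq_transpose_of_trivial, Matrix.transpose_transpose] at h1
    rwa [hYB] at h1
  -- T2 = T1
  have hT2 : (B * H * (Y * H)).trace = (Y * H * (B * H)).trace := by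
    rw [Matrix.trace_mul_comm]
  -- T1 - T3 = trace (Eᵀ * (Y - B) * E)
  have hT13 : (Eᵀ * (X⁻¹ - B) * E).trace =
      (Y * H * (B * H)).trace - (B * H * (B * H)).trace := by
    rw [trace_conj_eq, hEE, Matrix.sub_mul, Matrix.trace_sub, hY]
    simp only [Matrix.mul_assoc]
  constructor
  · have h1 := trace_conj_nonneg hY'.posSemidef E
    have h2 := trace_conj_nonneg hYBpsd E
    rw [hT1] at h1
    rw [hT13] at h2
    rw [hT2]
    linarith
  · constructor
    · intro h
      have h2 := trace_conj_nonneg hYBpsd E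
      rw [hT13] at h2
      have h1 : (Y * H * (B * H)).trace = 0 := by
        have h3 := trace_conj_nonneg hY'.posSemidef E
        rw [hT1] at h3
        rw [hT2] at h
        linarith
      have hE0 : E = 0 := by
        rw [← hT1] at h1
        exact (trace_conj_eq_zero_iff hY' E).mp h1
      -- E = H * C = 0 ⇒ Cᵀ * H = 0 ⇒ S * (Kᵀ * X⁻¹ * H) = 0 ⇒ Kᵀ * X⁻¹ * H = 0
      have hCH : Cᵀ * H = 0 := by
        rw [← hEt, hE0, Matrix.transpose_zero]
      have hSKH : S * (Kᵀ * X⁻¹ * H) = 0 := by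
        rw [← Matrix.mul_assoc, ← hCt]
        exact hCH
      calc Kᵀ * X⁻¹ * H = (S⁻¹ * S) * (Kᵀ * X⁻¹ * H) := by
            rw [Matrix.nonsing_inv_mul S hSdet, Matrix.one_mul]
        _ = S⁻¹ * (S * (Kᵀ * X⁻¹ * H)) := by rw [Matrix.mul_assoc]
        _ = 0 := by rw [hSKH, Matrix.mul_zero]
    · intro h
      have hBH : B * H = 0 := by
        rw [hB]
        calc X⁻¹ * K * (Kᵀ * X⁻¹ * K)⁻¹ * Kᵀ * X⁻¹ * H
            = X⁻¹ * K * (Kᵀ * X⁻¹ * K)⁻¹ * (Kᵀ * X⁻¹ * H) := by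
              simp only [Matrix.mul_assoc]
          _ = 0 := by rw [h, Matrix.mul_zero]
      rw [hBH]
      simp

lemma inj_of_rank {m k : ℕ} (K : Matrix (Fin m) (Fin k) ℝ) (hK : K.rank = k) :
    Function.Injective K.mulVecLin := by
  rw [← LinearMap.ker_eq_bot]
  have h := LinearMap.finrank_range_add_finrank_ker K.mulVecLin
  have hr : Module.finrank ℝ (LinearMap.range K.mulVecLin) = k := hK
  rw [hr, Module.finrank_fintype_fun_eq_card, Fintype.card_fin] at h
  have h0 : Module.finrank ℝ (LinearMap.ker K.mulVecLin) = 0 := by omega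
  exact Submodule.finrank_eq_zero.mp h0

lemma posDef_A {m k : ℕ} (K : Matrix (Fin m) (Fin k) ℝ)
    (hKinj : Function.Injective K.mulVecLin) (X : Matrix (Fin m) (Fin m) ℝ) (hX : X.PosDef) :
    (Kᵀ * X⁻¹ * K).PosDef := by
  have hY' : (X⁻¹).PosDef := hX.inv
  refine Matrix.posDef_iff_dotProduct_mulVec.mpr ⟨?_, fun x hx => ?_⟩
  · have h := Matrix.isHermitian_conjTranspose_mul_mul K hY'.1
    rwa [Matrix.conjTranspose_eq_transpose_of_trivial] at h
  · have hKx : K *ᵥ x ≠ 0 := by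
      intro h0
      apply hx
      have : K.mulVecLin x = K.mulVecLin 0 := by
        simpa [Matrix.mulVecLin_apply] using h0
      exact hKinj this
    have hpos := hY'.dotProduct_mulVec_pos hKx
    have hdot : dotProduct (star x) ((Kᵀ * X⁻¹ * K) *ᵥ x) =
        dotProduct (star (K *ᵥ x)) (X⁻¹ *ᵥ (K *ᵥ x)) := by
      rw [← Matrix.mulVec_mulVec, ← Matrix.mulVec_mulVec]
      rw [show star x = x from funext fun i => star_trivial _,
        show star (K *ᵥ x) = K *ᵥ x from funext fun i => star_trivial _]
      rw [dotProduct_mulVec x Kᵀ, Matrix.vecMul_transpose]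
    rw [hdot]
    exact hpos

def symmSubmodule (d : ℕ) : Submodule ℝ (Matrix (Fin d) (Fin d) ℝ) where
  carrier := {S | Sᵀ = S}
  add_mem' := by
    intro a b ha hb
    simp only [Set.mem_setOf_eq] at *
    rw [Matrix.transpose_add, ha, hb]
  zero_mem' := Matrix.transpose_zero
  smul_mem' := by
    intro r a ha
    simp only [Set.mem_setOf_eq] at *
    rw [Matrix.transpose_smul, ha]

lemma finrank_symmSubmodule (d : ℕ) :
    Module.finrank ℝ (symmSubmodule d) = d * (d + 1) / 2 := by
  classical
  let σ := {p : Fin d × Fin d // p.1 ≤ p.2}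
  let f : symmSubmodule d →ₗ[ℝ] (σ → ℝ) :=
    { toFun := fun S p => (S : Matrix (Fin d) (Fin d) ℝ) p.1.1 p.1.2
      map_add' := fun S T => rfl
      map_smul' := fun r S => rfl }
  have hbij : Function.Bijective f := by
    constructor
    · intro S T hST
      ext1
      ext i j
      rcases le_total i j with h | h
      · exact congrFun hST ⟨(i, j), h⟩
      · have h1 : (S : Matrix (Fin d) (Fin d) ℝ) j i = (T : Matrix (Fin d) (Fin d) ℝ) j i :=
          congrFun hST ⟨(j, i), h⟩
        have hS := S.2
        have hT := T.2
        calc (S : Matrix (Fin d) (Fin d) ℝ) i j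
            = (S : Matrix (Fin d) (Fin d) ℝ)ᵀ j i := rfl
          _ = (T : Matrix (Fin d) (Fin d) ℝ)ᵀ j i := by
              show ((S : Matrix (Fin d) (Fin d) ℝ)ᵀ) j i = _
              rw [hS, hT]; exact h1
          _ = (T : Matrix (Fin d) (Fin d) ℝ) i j := rfl
    · intro v
      refine ⟨⟨Matrix.of fun i j =>
        if h : i ≤ j then v ⟨(i, j), h⟩ else v ⟨(j, i), le_of_not_ge h⟩, ?_⟩, ?_⟩
      · show _ᵀ = _
        ext i j
        simp only [Matrix.transpose_apply, Matrix.of_apply]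
        by_cases h1 : i ≤ j <;> by_cases h2 : j ≤ i
        · have hij : i = j := le_antisymm h1 h2
          subst hij; rfl
        · rw [dif_neg h2, dif_pos h1]
        · rw [dif_pos h2, dif_neg h1]
        · rcases le_total i j with h | h
          · exact absurd h h1
          · exact absurd h h2
      · funext p
        rcases p with ⟨⟨i, j⟩, hp⟩
        show (Matrix.of fun i j =>
          if h : i ≤ j then v ⟨(i, j), h⟩ else v ⟨(j, i), le_of_not_ge h⟩) i j = _
        rw [Matrix.of_apply, dif_pos hp]
  have e := LinearEquiv.ofBijective f hbij
  have h1 : Module.finrank ℝ (symmSubmodule d) = Fintype.card σ := by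
    rw [e.finrank_eq, Module.finrank_fintype_fun_eq_card]
  rw [h1]
  have h2 : Fintype.card σ = Fintype.card (Sym2 (Fin d)) :=
    Fintype.card_congr (Sym2.sortEquiv (α := Fin d)).symm
  rw [h2, Sym2.card, Fintype.card_fin, Nat.choose_two_right]
  simp [Nat.mul_comm]

lemma exists_UL {m k : ℕ} (K : Matrix (Fin m) (Fin k) ℝ) (hK : K.rank = k) :
    ∃ (U : Matrix (Fin m) (Fin (m - k)) ℝ) (L : Matrix (Fin (m - k)) (Fin m) ℝ),
      L * U = 1 ∧ Kᵀ * U = 0 ∧ ∀ x : Fin m → ℝ, Kᵀ *ᵥ x = 0 → ∃ c, U *ᵥ c = x := by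
  classical
  set W := LinearMap.ker (Kᵀ.mulVecLin) with hWdef
  have hrange : Module.finrank ℝ (LinearMap.range Kᵀ.mulVecLin) = k := by
    have h : (Kᵀ).rank = k := by rw [Matrix.rank_transpose, hK]
    exact h
  have hsum := LinearMap.finrank_range_add_finrank_ker Kᵀ.mulVecLin
  rw [hrange, Module.finrank_fintype_fun_eq_card, Fintype.card_fin] at hsum
  have hWrank : Module.finrank ℝ W = m - k := by rw [hWdef]; omega
  let b : Module.Basis (Fin (m - k)) ℝ W := Module.finBasisOfFinrankEq ℝ W hWrank
  set U : Matrix (Fin m) (Fin (m - k)) ℝ := Matrix.of fun i j => (b j : Fin m → ℝ) i with hUdef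
  have hUmv : ∀ c : Fin (m - k) → ℝ, U *ᵥ c = ∑ j, c j • ((b j : Fin m → ℝ)) := by
    intro c
    funext i
    simp [hUdef, Matrix.mulVec, dotProduct, Finset.sum_apply, mul_comm]
  have hKU : Kᵀ * U = 0 := by
    ext i j
    have hb : Kᵀ *ᵥ (b j : Fin m → ℝ) = 0 := (b j).2
    calc (Kᵀ * U) i j = (Kᵀ *ᵥ (b j : Fin m → ℝ)) i := by
          simp [Matrix.mul_apply, Matrix.mulVec, dotProduct, hUdef]
      _ = 0 := by rw [hb]; rfl
  have hUker : LinearMap.ker U.mulVecLin = ⊥ := by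
    rw [LinearMap.ker_eq_bot']
    intro c hc
    have hc' : U *ᵥ c = 0 := hc
    rw [hUmv] at hc'
    have h1 : (∑ j, c j • b j : W) = 0 := by
      apply Subtype.coe_injective
      push_cast
      rw [← hc']
    have h2 := Fintype.linearIndependent_iff.mp b.linearIndependent c h1
    funext i
    exact h2 i
  obtain ⟨g, hg⟩ := LinearMap.exists_leftInverse_of_injective U.mulVecLin hUker
  refine ⟨U, LinearMap.toMatrix' g, ?_, hKU, ?_⟩
  · apply Matrix.toLin'.injective
    rw [Matrix.toLin'_mul, Matrix.toLin'_toMatrix', Matrix.toLin'_one]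
    rw [Matrix.toLin'_apply']
    exact hg
  · intro x hx
    have hxW : x ∈ W := by
      rw [hWdef, LinearMap.mem_ker]
      exact hx
    refine ⟨fun j => b.repr ⟨x, hxW⟩ j, ?_⟩
    rw [hUmv]
    have hrepr := b.sum_repr ⟨x, hxW⟩
    calc (∑ j, b.repr ⟨x, hxW⟩ j • (b j : Fin m → ℝ))
        = ((∑ j, b.repr ⟨x, hxW⟩ j • b j : W) : Fin m → ℝ) := by push_cast; rfl
      _ = x := by rw [hrepr]

end DCrit

/-- For `Φ_D(X) = log det (Kᵀ X⁻¹ K)` and symmetric positive definite `X`, the second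
derivative quadratic form `H ↦ D²Φ_D(X)[H,H]` (the derivative at `0` of
`t ↦ DΦ_D(X + tH)[H]`) is nonnegative on symmetric matrices, vanishes iff `Kᵀ X⁻¹ H = 0`,
and its null space is a linear subspace of `S^m` of dimension `(m-k)(m-k+1)/2`;
equivalently the Hessian has rank `m(m+1)/2 - (m-k)(m-k+1)/2`. -/
theorem D_criterion_hessian_nullspace (m k : ℕ) (hm : 1 ≤ m) (hk : 1 ≤ k) (hkm : k ≤ m)
    (K : Matrix (Fin m) (Fin k) ℝ) (hK : K.rank = k)
    (X : Matrix (Fin m) (Fin m) ℝ) (hX : X.PosDef) :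
    (∀ H : Matrix (Fin m) (Fin m) ℝ, H.IsSymm →
      ∃ q : ℝ, HasDerivAt (fun t : ℝ => D1D K (X + t • H) H) q 0 ∧
        0 ≤ q ∧ (q = 0 ↔ Kᵀ * X⁻¹ * H = 0)) ∧
    ∃ V : Submodule ℝ (Matrix (Fin m) (Fin m) ℝ),
      (V : Set (Matrix (Fin m) (Fin m) ℝ)) =
        {H | H.IsSymm ∧ deriv (fun t : ℝ => D1D K (X + t • H) H) 0 = 0} ∧
      Module.finrank ℝ V = (m - k) * (m - k + 1) / 2 := by
  have hKinj := DCrit.inj_of_rank K hK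
  have hA := DCrit.posDef_A K hKinj X hX
  have hXdet : IsUnit X.det := hX.det_pos.ne'.isUnit
  have hAdet : IsUnit (Kᵀ * X⁻¹ * K).det := hA.det_pos.ne'.isUnit
  have hXu : IsUnit X := (Matrix.isUnit_iff_isUnit_det X).mpr hXdet
  have hAu : IsUnit (Kᵀ * X⁻¹ * K) := (Matrix.isUnit_iff_isUnit_det _).mpr hAdet
  have part1 : ∀ H : Matrix (Fin m) (Fin m) ℝ, H.IsSymm →
      ∃ q : ℝ, HasDerivAt (fun t : ℝ => D1D K (X + t • H) H) q 0 ∧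
        0 ≤ q ∧ (q = 0 ↔ Kᵀ * X⁻¹ * H = 0) := by
    intro H hH
    have hHs : Hᵀ = H := hH
    have hd := DCrit.hasDerivAt_main K X H hXu hAu X⁻¹
      (X⁻¹ * K * (Kᵀ * X⁻¹ * K)⁻¹ * Kᵀ * X⁻¹) rfl rfl
    have hq := DCrit.quad_props K X H hX hA hHs X⁻¹
      (X⁻¹ * K * (Kᵀ * X⁻¹ * K)⁻¹ * Kᵀ * X⁻¹) rfl rfl
    exact ⟨_, hd, hq.1, hq.2⟩
  refine ⟨part1, ?_⟩
  obtain ⟨U, L, hLU, hKU, hspan⟩ := DCrit.exists_UL K hK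
  let V₁ : Submodule ℝ (Matrix (Fin m) (Fin m) ℝ) :=
    { carrier := {H | Hᵀ = H ∧ Kᵀ * X⁻¹ * H = 0}
      add_mem' := by
        rintro a b ⟨ha1, ha2⟩ ⟨hb1, hb2⟩
        exact ⟨by rw [Matrix.transpose_add, ha1, hb1],
          by rw [Matrix.mul_add, ha2, hb2, add_zero]⟩
      zero_mem' := ⟨Matrix.transpose_zero, by rw [Matrix.mul_zero]⟩
      smul_mem' := by
        rintro r a ⟨ha1, ha2⟩
        exact ⟨by rw [Matrix.transpose_smul, ha1], by rw [Matrix.mul_smul, ha2, smul_zero]⟩ }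
  have hmemV₁ : ∀ H : Matrix (Fin m) (Fin m) ℝ, H ∈ V₁ ↔ Hᵀ = H ∧ Kᵀ * X⁻¹ * H = 0 :=
    fun H => Iff.rfl
  refine ⟨V₁, ?_, ?_⟩
  · ext H
    rw [SetLike.mem_coe, hmemV₁, Set.mem_setOf_eq]
    constructor
    · rintro ⟨h1, h2⟩
      obtain ⟨q, hdq, _, hiff⟩ := part1 H h1
      exact ⟨h1, by rw [hdq.deriv]; exact hiff.mpr h2⟩
    · rintro ⟨h1, h2⟩
      obtain ⟨q, hdq, _, hiff⟩ := part1 H h1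
      refine ⟨h1, hiff.mp ?_⟩
      rw [← hdq.deriv]
      exact h2
  · -- dimension count
    have hXX : X * X⁻¹ = 1 := Matrix.mul_nonsing_inv X hXdet
    have hXX' : X⁻¹ * X = 1 := Matrix.nonsing_inv_mul X hXdet
    have hXt : Xᵀ = X := by
      rw [← Matrix.conjTranspose_eq_transpose_of_trivial]; exact hX.1
    have hYt : X⁻¹ᵀ = X⁻¹ := by rw [Matrix.transpose_nonsing_inv, hXt]
    let V₀ : Submodule ℝ (Matrix (Fin m) (Fin m) ℝ) :=
      { carrier := {G | Gᵀ = G ∧ Kᵀ * G = 0}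
        add_mem' := by
          rintro a b ⟨ha1, ha2⟩ ⟨hb1, hb2⟩
          exact ⟨by rw [Matrix.transpose_add, ha1, hb1],
            by rw [Matrix.mul_add, ha2, hb2, add_zero]⟩
        zero_mem' := ⟨Matrix.transpose_zero, by rw [Matrix.mul_zero]⟩
        smul_mem' := by
          rintro r a ⟨ha1, ha2⟩
          exact ⟨by rw [Matrix.transpose_smul, ha1], by rw [Matrix.mul_smul, ha2, smul_zero]⟩ }
    have hmemV₀ : ∀ G : Matrix (Fin m) (Fin m) ℝ, G ∈ V₀ ↔ Gᵀ = G ∧ Kᵀ * G = 0 :=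
      fun G => Iff.rfl
    let φ : Matrix (Fin m) (Fin m) ℝ ≃ₗ[ℝ] Matrix (Fin m) (Fin m) ℝ :=
      LinearEquiv.ofLinear (DCrit.sandwichL X X) (DCrit.sandwichL X⁻¹ X⁻¹)
        (by
          refine LinearMap.ext fun M => ?_
          show X * (X⁻¹ * M * X⁻¹) * X = M
          calc X * (X⁻¹ * M * X⁻¹) * X = X * X⁻¹ * M * (X⁻¹ * X) := by
                simp only [Matrix.mul_assoc]
            _ = M := by rw [hXX, hXX', Matrix.one_mul, Matrix.mul_one])
        (by
          refine LinearMap.ext fun M => ?_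
          show X⁻¹ * (X * M * X) * X⁻¹ = M
          calc X⁻¹ * (X * M * X) * X⁻¹ = X⁻¹ * X * M * (X * X⁻¹) := by
                simp only [Matrix.mul_assoc]
            _ = M := by rw [hXX, hXX', Matrix.one_mul, Matrix.mul_one])
    have hmap1 : V₁ = Submodule.map
        (φ : Matrix (Fin m) (Fin m) ℝ →ₗ[ℝ] Matrix (Fin m) (Fin m) ℝ) V₀ := by
      ext Hm
      rw [hmemV₁, Submodule.mem_map]
      constructor
      · rintro ⟨h1, h2⟩
        refine ⟨X⁻¹ * Hm * X⁻¹, (hmemV₀ _).mpr ⟨?_, ?_⟩, ?_⟩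
        · rw [Matrix.transpose_mul, Matrix.transpose_mul, hYt, h1]
          simp only [Matrix.mul_assoc]
        · calc Kᵀ * (X⁻¹ * Hm * X⁻¹) = Kᵀ * X⁻¹ * Hm * X⁻¹ := by simp only [Matrix.mul_assoc]
            _ = 0 := by rw [h2, Matrix.zero_mul]
        · show X * (X⁻¹ * Hm * X⁻¹) * X = Hm
          calc X * (X⁻¹ * Hm * X⁻¹) * X = X * X⁻¹ * Hm * (X⁻¹ * X) := by
                simp only [Matrix.mul_assoc]
            _ = Hm := by rw [hXX, hXX', Matrix.one_mul, Matrix.mul_one]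
      · rintro ⟨G, hG, rfl⟩
        obtain ⟨hg1, hg2⟩ := (hmemV₀ G).mp hG
        constructor
        · show (X * G * X)ᵀ = X * G * X
          rw [Matrix.transpose_mul, Matrix.transpose_mul, hXt, hg1]
          simp only [Matrix.mul_assoc]
        · show Kᵀ * X⁻¹ * (X * G * X) = 0
          calc Kᵀ * X⁻¹ * (X * G * X) = Kᵀ * (X⁻¹ * X) * G * X := by
                simp only [Matrix.mul_assoc]
            _ = Kᵀ * G * X := by rw [hXX', Matrix.mul_one]
            _ = 0 := by rw [hg2, Matrix.zero_mul]
    -- V₀ as image of symmetric matrices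
    have hψinj : Function.Injective (DCrit.sandwichL U Uᵀ) := by
      have hrec : ∀ S : Matrix (Fin (m - k)) (Fin (m - k)) ℝ,
          L * ((DCrit.sandwichL U Uᵀ) S) * Lᵀ = S := by
        intro S
        show L * (U * S * Uᵀ) * Lᵀ = S
        calc L * (U * S * Uᵀ) * Lᵀ = (L * U) * S * (L * U)ᵀ := by
              rw [Matrix.transpose_mul]
              simp only [Matrix.mul_assoc]
          _ = S := by rw [hLU, Matrix.transpose_one, Matrix.one_mul, Matrix.mul_one]
      intro S T h
      rw [← hrec S, ← hrec T, h]
    have hmap2 : V₀ = Submodule.map (DCrit.sandwichL U Uᵀ) (DCrit.symmSubmodule (m - k)) := by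
      ext G
      rw [hmemV₀, Submodule.mem_map]
      constructor
      · rintro ⟨hg1, hg2⟩
        have hcol : ∀ j, Kᵀ *ᵥ (fun i => G i j) = 0 := by
          intro j
          funext i
          have h := congrFun (congrFun hg2 i) j
          simpa [Matrix.mul_apply, Matrix.mulVec, dotProduct] using h
        choose cc hcc using fun j => hspan _ (hcol j)
        have hUC : U * (Matrix.of fun l j => cc j l) = G := by
          ext i j
          have h := congrFun (hcc j) i
          simpa [Matrix.mul_apply, Matrix.mulVec, dotProduct] using h
        have hULG : U * L * G = G := by
          conv_lhs => rw [← hUC]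
          calc U * L * (U * Matrix.of fun l j => cc j l)
              = U * (L * U) * Matrix.of (fun l j => cc j l) := by simp only [Matrix.mul_assoc]
            _ = U * Matrix.of (fun l j => cc j l) := by rw [hLU, Matrix.mul_one]
            _ = G := hUC
        refine ⟨L * G * Lᵀ, ?_, ?_⟩
        · show (L * G * Lᵀ)ᵀ = L * G * Lᵀ
          rw [Matrix.transpose_mul, Matrix.transpose_mul, Matrix.transpose_transpose, hg1]
          simp only [Matrix.mul_assoc]
        · show U * (L * G * Lᵀ) * Uᵀ = G
          calc U * (L * G * Lᵀ) * Uᵀ = (U * L * G) * (U * L)ᵀ := by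
                rw [Matrix.transpose_mul]
                simp only [Matrix.mul_assoc]
            _ = G * (U * L)ᵀ := by rw [hULG]
            _ = (U * L * Gᵀ)ᵀ := by
                rw [Matrix.transpose_mul (U * L) Gᵀ, Matrix.transpose_transpose]
            _ = (U * L * G)ᵀ := by rw [hg1]
            _ = Gᵀ := by rw [hULG]
            _ = G := hg1
      · rintro ⟨S, hS, rfl⟩
        have hS' : Sᵀ = S := hS
        constructor
        · show (U * S * Uᵀ)ᵀ = U * S * Uᵀ
          rw [Matrix.transpose_mul, Matrix.transpose_mul, Matrix.transpose_transpose, hS']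
          simp only [Matrix.mul_assoc]
        · show Kᵀ * (U * S * Uᵀ) = 0
          calc Kᵀ * (U * S * Uᵀ) = (Kᵀ * U) * (S * Uᵀ) := by simp only [Matrix.mul_assoc]
            _ = 0 := by rw [hKU, Matrix.zero_mul]
    have e2 := Submodule.equivMapOfInjective _ hψinj (DCrit.symmSubmodule (m - k))
    calc Module.finrank ℝ V₁
        = Module.finrank ℝ (Submodule.map
            (φ : Matrix (Fin m) (Fin m) ℝ →ₗ[ℝ] Matrix (Fin m) (Fin m) ℝ) V₀) := by rw [← hmap1]
      _ = Module.finrank ℝ V₀ := LinearEquiv.finrank_map_eq φ V₀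
      _ = Module.finrank ℝ (DCrit.symmSubmodule (m - k)) := by
          rw [hmap2]
          exact e2.finrank_eq.symm
      _ = (m - k) * (m - k + 1) / 2 := DCrit.finrank_symmSubmodule (m - k)

end
end

section
/- Let a, b be positive real numbers with a ≠ b, and let q ∈ (0,1). Then a^{-1} b^{-q} ≥ −(a^{-q} − b^{-q})/(a − b). -/
/-- For positive reals `a ≠ b` and `q ∈ (0,1)`,
`a⁻¹ b^{-q} ≥ -(a^{-q} - b^{-q})/(a - b)`. -/
theorem rpow_difference_quotient_bound (a b q : ℝ) (ha : 0 < a) (hb : 0 < b) (hab : a ≠ b)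
    (hq0 : 0 < q) (hq1 : q < 1) :
    -((a ^ (-q) - b ^ (-q)) / (a - b)) ≤ a ^ (-1 : ℝ) * b ^ (-q) := by
  have hx : (0:ℝ) < a ^ q := Real.rpow_pos_of_pos ha q
  have hy : (0:ℝ) < b ^ q := Real.rpow_pos_of_pos hb q
  have hAq : a ^ (-q) = (a ^ q)⁻¹ := by rw [Real.rpow_neg ha.le]
  have hBq : b ^ (-q) = (b ^ q)⁻¹ := by rw [Real.rpow_neg hb.le]
  have hA1 : a ^ (-1 : ℝ) = a⁻¹ := Real.rpow_neg_one a
  rw [hAq, hBq, hA1]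
  rcases lt_or_gt_of_ne hab with h | h
  · -- a < b : (b/a)^q ≤ b/a
    have ht : (1:ℝ) ≤ b / a := le_of_lt ((one_lt_div ha).mpr h)
    have hk : (b / a) ^ q ≤ (b / a) ^ (1:ℝ) :=
      Real.rpow_le_rpow_of_exponent_le ht hq1.le
    rw [Real.rpow_one, Real.div_rpow hb.le ha.le, div_le_div_iff₀ hx ha] at hk
    rw [← neg_div, div_le_iff_of_neg (sub_neg.mpr h)]
    field_simp
    nlinarith [mul_nonneg (sub_nonneg.mpr hk) hy.le]
  · -- b < a : b/a ≤ (b/a)^q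
    have ht1 : b / a ≤ 1 := le_of_lt ((div_lt_one ha).mpr h)
    have ht0 : 0 < b / a := div_pos hb ha
    have hk : (b / a) ^ (1:ℝ) ≤ (b / a) ^ q :=
      Real.rpow_le_rpow_of_exponent_ge ht0 ht1 hq1.le
    rw [Real.rpow_one, Real.div_rpow hb.le ha.le, div_le_div_iff₀ ha hx] at hk
    rw [← neg_div, div_le_iff₀ (sub_pos.mpr h)]
    field_simp
    nlinarith [mul_nonneg (sub_nonneg.mpr hk) hy.le]
end
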